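/- arXiv:1209.4592 — 4 statements merged into one kernel-verified Lean document; each statement's English description precedes it below -/
import Mathlib

section
/- Let ξ₁, ξ₂, … be i.i.d. draws from a discrete distribution on S = {1,…,m} with density p, and for 1 ≤ k ≤ m let X_m(k) be the minimum number of draws needed to observe k distinct values. Then E[X_m(k)] = 1 + Σ_{i₁} p_{i₁}/p(i₁) + Σ_{i₁≠i₂} p_{i₁}p_{i₂}/(p(i₁)p(i₁,i₂)) + ⋯ + Σ_{i₁,…,i_{k−1} pairwise distinct} p_{i₁}⋯p_{i_{k−1}}/(p(i₁)p(i₁,i₂)⋯p(i₁,…,i_{k−1})), where all indices range over {1,…,m} and p(i₁,…,i_s) = 1 − p_{i₁} − ⋯ − p_{i_s}. -/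
open MeasureTheory ProbabilityTheory Finset
open scoped ENNReal

/-- Number of distinct values observed among the first `n` draws `ξ 0, …, ξ (n-1)`. -/
noncomputable def numDistinct {m : ℕ} {Ω : Type*} (ξ : ℕ → Ω → Fin m) (n : ℕ) (ω : Ω) : ℕ :=
  (Finset.image (fun t : Fin n => ξ t ω) Finset.univ).card

/-- `drawsNeeded ξ k ω` is the minimum number of draws needed to observe `k` distinct
values (`⊤` if fewer than `k` distinct values ever appear). -/
noncomputable def drawsNeeded {m : ℕ} {Ω : Type*} (ξ : ℕ → Ω → Fin m) (k : ℕ) (ω : Ω) : ℕ∞ :=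
  sInf ((fun n : ℕ => (n : ℕ∞)) '' {n | k ≤ numDistinct ξ n ω})

/-- `gap ξ k ω` is the number of additional draws needed to pass from the `(k-1)`-th to
the `k`-th distinct observed value. -/
noncomputable def gap {m : ℕ} {Ω : Type*} (ξ : ℕ → Ω → Fin m) (k : ℕ) (ω : Ω) : ℕ∞ :=
  drawsNeeded ξ k ω - drawsNeeded ξ (k - 1) ω

/-- `firstHit ξ i ω` is the index (counting draws from 1) of the first draw equal to `i`. -/
noncomputable def firstHit {m : ℕ} {Ω : Type*} (ξ : ℕ → Ω → Fin m) (i : Fin m) (ω : Ω) : ℕ∞ :=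
  sInf ((fun t : ℕ => (t : ℕ∞) + 1) '' {t | ξ t ω = i})

/-- `recordType ξ j ω` is the type of the `j`-th distinct value observed, in order of
first appearance (junk value if fewer than `j` distinct values ever appear). -/
noncomputable def recordType {m : ℕ} {Ω : Type*} (ξ : ℕ → Ω → Fin m) (j : ℕ) (ω : Ω) : Fin m :=
  ξ (sInf {n : ℕ | j ≤ numDistinct ξ (n + 1) ω}) ω

/-- The generic term `p_{i₁}⋯p_{i_s} / (p(i₁) p(i₁,i₂) ⋯ p(i₁,…,i_s))` of the nested sums,
where the pairwise distinct indices `(i₁,…,i_s)` are encoded by the embedding `f`. -/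
noncomputable def nestedTerm {m : ℕ} (p : Fin m → ℝ) (s : ℕ) (f : Fin s ↪ Fin m) : ℝ :=
  (∏ t, p (f t)) / ∏ t : Fin s, (1 - ∑ r ∈ Finset.univ.filter (· ≤ t), p (f r))

/-- The sum of `nestedTerm p s` over all tuples of pairwise distinct indices. -/
noncomputable def nestedSum {m : ℕ} (p : Fin m → ℝ) (s : ℕ) : ℝ :=
  ∑ f : Fin s ↪ Fin m, nestedTerm p s f

namespace CCAux

variable {α : Type*} [DecidableEq α]

/-- record sequence: distinct values in order of first appearance -/
def recs : List α → List α
  | [] => []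
  | a :: l => a :: (recs l).filter (fun x => x ≠ a)

@[simp] lemma recs_nil : recs ([] : List α) = [] := rfl

lemma recs_cons (a : α) (l : List α) :
    recs (a :: l) = a :: (recs l).filter (fun x => x ≠ a) := rfl

lemma mem_recs {l : List α} {x : α} : x ∈ recs l ↔ x ∈ l := by
  induction l with
  | nil => simp
  | cons a l ih =>
    by_cases hx : x = a
    · subst hx; simp [recs_cons]
    · simp [recs_cons, List.mem_filter, hx, ih]

lemma recs_nodup (l : List α) : (recs l).Nodup := by
  induction l with
  | nil => simp
  | cons a l ih =>
    rw [recs_cons]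
    refine List.Nodup.cons ?_ (ih.filter _)
    intro h
    have := (List.mem_filter.1 h).2
    simp at this

lemma recs_eq_nil_iff {l : List α} : recs l = [] ↔ l = [] := by
  cases l <;> simp [recs_cons]

lemma recs_append (w u : List α) :
    recs (w ++ u) = recs w ++ (recs u).filter (fun x => x ∉ w) := by
  induction w with
  | nil => simp
  | cons a w ih =>
    rw [List.cons_append, recs_cons, ih, recs_cons, List.filter_append, List.cons_append,
      List.filter_filter]
    congr 2
    apply List.filter_congr
    intro x _
    by_cases h1 : x = a <;> by_cases h2 : x ∈ w <;> simp [h1, h2]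

lemma first_split {l : List α} {a : α} (h : a ∈ l) :
    ∃ w u, l = w ++ a :: u ∧ a ∉ w := by
  induction l with
  | nil => simp at h
  | cons b t ih =>
    by_cases hb : b = a
    · exact ⟨[], t, by simp [hb], by simp⟩
    · have ha : a ∈ t := by
        rcases List.mem_cons.1 h with h' | h'
        · exact absurd h'.symm hb
        · exact h'
      obtain ⟨w, u, hwu, hw⟩ := ih ha
      refine ⟨b :: w, u, by rw [hwu]; rfl, ?_⟩
      intro hmem
      rcases List.mem_cons.1 hmem with h' | h'
      · exact hb h'.symm
      · exact hw h'

lemma append_cons_inj {w w' u u' : List α} {a : α} (ha : a ∉ w) (ha' : a ∉ w')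
    (h : w ++ a :: u = w' ++ a :: u') : w = w' ∧ u = u' := by
  induction w generalizing w' with
  | nil =>
    cases w' with
    | nil => simpa using h
    | cons b w'' =>
      simp only [List.nil_append, List.cons_append, List.cons.injEq] at h
      exact absurd (show a ∈ b :: w'' by rw [h.1]; exact List.mem_cons_self) ha'
  | cons b w ih =>
    cases w' with
    | nil =>
      simp only [List.cons_append, List.nil_append, List.cons.injEq] at h
      exact absurd (by simp [h.1]) ha
    | cons c w'' =>
      simp only [List.cons_append, List.cons.injEq] at h
      obtain ⟨rfl, h2⟩ := h
      have := ih (fun hmem => ha (List.mem_cons_of_mem _ hmem))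
        (fun hmem => ha' (List.mem_cons_of_mem _ hmem)) h2
      exact ⟨by rw [this.1], this.2⟩

lemma recs_append_cons (w u : List α) {a : α} (ha : a ∉ w) :
    recs (w ++ a :: u)
      = recs w ++ a :: (((recs u).filter (fun x => x ≠ a)).filter (fun x => x ∉ w)) := by
  rw [recs_append, recs_cons, List.filter_cons]
  simp [ha]

lemma recs_concat_of (w u : List α) {a : α} (ha : a ∉ w)
    (hu : ∀ x ∈ u, x = a ∨ x ∈ w) : recs (w ++ a :: u) = recs w ++ [a] := by
  rw [recs_append_cons w u ha]
  have : ((recs u).filter (fun x => x ≠ a)).filter (fun x => x ∉ w) = [] := by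
    rw [List.filter_eq_nil_iff]
    intro x hx
    have hxu : x ∈ u := mem_recs.1 (List.mem_filter.1 hx).1
    have hxa : x ≠ a := by simpa using (List.mem_filter.1 hx).2
    rcases hu x hxu with h | h
    · exact absurd h hxa
    · simp [h]
  rw [this]

lemma recs_split {l : List α} {R : List α} {a : α} (hR : a ∉ R)
    (h : recs l = R ++ [a]) :
    ∃ w u, l = w ++ a :: u ∧ a ∉ w ∧ recs w = R ∧ ∀ x ∈ u, x = a ∨ x ∈ w := by
  have hal : a ∈ l := mem_recs.1 (h ▸ (by simp : a ∈ R ++ [a]))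
  obtain ⟨w, u, rfl, haw⟩ := first_split hal
  rw [recs_append_cons w u haw] at h
  have harw : a ∉ recs w := fun h' => haw (mem_recs.1 h')
  obtain ⟨hwR, hF⟩ := append_cons_inj harw hR h
  refine ⟨w, u, rfl, haw, hwR, ?_⟩
  intro x hxu
  by_cases hxa : x = a
  · exact Or.inl hxa
  · right
    by_contra hxw
    have hxF : x ∈ (((recs u).filter (fun y => y ≠ a)).filter (fun y => y ∉ w)) := by
      rw [List.mem_filter, List.mem_filter]
      exact ⟨⟨mem_recs.2 hxu, by simpa using hxa⟩, by simpa using hxw⟩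
    rw [hF] at hxF
    simp at hxF


/-! ### Weights -/

variable (q : α → ℝ≥0∞)

/-- weight of a list -/
noncomputable def LW (l : List α) : ℝ≥0∞ := (l.map q).prod

omit [DecidableEq α] in
@[simp] lemma LW_nil : LW q ([] : List α) = 1 := rfl

omit [DecidableEq α] in
@[simp] lemma LW_cons (a : α) (l : List α) : LW q (a :: l) = q a * LW q l := by
  simp [LW]

omit [DecidableEq α] in
@[simp] lemma LW_append (l l' : List α) : LW q (l ++ l') = LW q l * LW q l' := by
  simp [LW]

omit [DecidableEq α] in
lemma LW_ofFn {n : ℕ} (v : Fin n → α) : LW q (List.ofFn v) = ∏ t, q (v t) := by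
  rw [LW, List.map_ofFn, List.prod_ofFn]
  simp [Function.comp]

omit [DecidableEq α] in
lemma sum_tuple_pow [Fintype α] (n : ℕ) :
    ∑ v : Fin n → α, ∏ t, q (v t) = (∑ x, q x) ^ n := by
  induction n with
  | zero => simp
  | succ n ih =>
    rw [pow_succ', ← ih]
    rw [← (Fin.consEquiv (fun _ : Fin (n+1) => α)).sum_comp (fun v => ∏ t, q (v t))]
    rw [Fintype.sum_prod_type]
    rw [Finset.sum_mul]
    refine Finset.sum_congr rfl fun x _ => ?_
    rw [Finset.mul_sum]
    refine Finset.sum_congr rfl fun w _ => ?_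
    rw [Fin.prod_univ_succ]
    simp [Fin.consEquiv]

omit [DecidableEq α] in
lemma tsum_list_all [Fintype α] :
    ∑' l : List α, LW q l = (1 - ∑ x, q x)⁻¹ := by
  rw [← ENNReal.tsum_geometric]
  rw [← (List.equivSigmaTuple (α := α)).symm.tsum_eq (LW q)]
  rw [ENNReal.tsum_sigma']
  refine tsum_congr fun n => ?_
  rw [tsum_fintype]
  have : ∀ v : Fin n → α, LW q (List.equivSigmaTuple.symm ⟨n, v⟩) = ∏ t, q (v t) := by
    intro v
    exact LW_ofFn q v
  simp only [this]
  exact sum_tuple_pow q n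

lemma tsum_list_finset (T : Finset α) :
    ∑' u : {u : List α // ∀ x ∈ u, x ∈ T}, LW q u.1 = (1 - ∑ x ∈ T, q x)⁻¹ := by
  classical
  have hE : ∀ L : List {x : α // x ∈ T}, (∀ x ∈ L.map Subtype.val, x ∈ T) := by
    intro L x hx
    rcases List.mem_map.1 hx with ⟨y, _, rfl⟩
    exact y.2
  let E : List {x : α // x ∈ T} ≃ {u : List α // ∀ x ∈ u, x ∈ T} :=
    { toFun := fun L => ⟨L.map Subtype.val, hE L⟩
      invFun := fun u => u.1.pmap (fun x h => (⟨x, h⟩ : {x : α // x ∈ T})) u.2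
      left_inv := by
        intro L
        induction L with
        | nil => rfl
        | cons a L ih => simpa [List.pmap] using ih
      right_inv := by
        intro u
        apply Subtype.ext
        simp only [List.map_pmap]
        simp [List.pmap_eq_map] }
  rw [← E.tsum_eq (fun u => LW q u.1)]
  have : ∀ L : List {x : α // x ∈ T}, LW q ((E L).1) = LW (fun x : {x : α // x ∈ T} => q x.1) L := by
    intro L
    simp only [E, Equiv.coe_fn_mk, LW, List.map_map]
    rfl
  simp only [this]
  rw [tsum_list_all]
  congr 1
  congr 1
  exact (Finset.sum_coe_sort T q)

lemma tsum_list_mem (L : List α) :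
    ∑' u : {u : List α // ∀ x ∈ u, x ∈ L}, LW q u.1 = (1 - ∑ x ∈ L.toFinset, q x)⁻¹ := by
  rw [← tsum_list_finset q L.toFinset]
  exact Equiv.tsum_eq (Equiv.subtypeEquivRight (fun u => by
    refine forall₂_congr fun y hy => ?_
    exact List.mem_toFinset (a := y) (l := L))) (fun u => LW q u.1) |>.symm

lemma tsum_ite_subtype (P : List α → Prop) [DecidablePred P] (F : List α → ℝ≥0∞) :
    ∑' l, (if P l then F l else 0) = ∑' l : {l : List α // P l}, F l.1 := by
  rw [show (∑' l : {l : List α // P l}, F l.1) = ∑' l : {l : List α | P l}, F l.1 from rfl,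
    _root_.tsum_subtype]
  exact tsum_congr fun l => by by_cases h : P l <;> simp [Set.indicator_apply, h]

omit [DecidableEq α] in
lemma ofFn_toFinset [DecidableEq α] {n : ℕ} (v : Fin n → α) :
    (List.ofFn v).toFinset = Finset.image v Finset.univ := by
  ext x
  simp [List.mem_ofFn, eq_comm]

lemma filter_le_castSucc (s : ℕ) (t : Fin s) :
    (Finset.univ.filter (fun r : Fin (s+1) => r ≤ Fin.castSucc t))
      = (Finset.univ.filter (fun r : Fin s => r ≤ t)).map Fin.castSuccEmb := by
  ext r
  simp only [Finset.mem_filter, Finset.mem_map, Finset.mem_univ, true_and]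
  constructor
  · intro hr
    have hr1 : r.1 ≤ t.1 := hr
    refine ⟨⟨r.1, lt_of_le_of_lt hr1 t.2⟩, ?_, ?_⟩
    · exact hr1
    · ext; simp [Fin.castSuccEmb]
  · rintro ⟨r', hr', rfl⟩
    exact Fin.castSucc_le_castSucc_iff.2 hr'

lemma tsum_recs (s : ℕ) (f : Fin s ↪ α) :
    ∑' l : List α, (if recs l = List.ofFn (⇑f) then LW q l else 0)
      = (∏ t, q (f t)) * ∏ t : Fin s, (1 - ∑ r ∈ Finset.univ.filter (· ≤ t), q (f r))⁻¹ := by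
  induction s with
  | zero =>
    rw [List.ofFn_zero, tsum_eq_single ([] : List α)]
    · simp
    · intro b hb
      rw [if_neg]
      intro hrec
      exact hb (recs_eq_nil_iff.1 hrec)
  | succ s ih =>
    set f' : Fin s ↪ α := Fin.castSuccEmb.trans f with hf'
    set a : α := f (Fin.last s) with ha
    set R : List α := List.ofFn (⇑f') with hRdef
    have h1 : List.ofFn (⇑f) = R ++ [a] := by
      rw [List.ofFn_succ' f, List.concat_eq_append]
      rfl
    have haR : a ∉ R := by
      intro hmem
      rw [hRdef, List.mem_ofFn] at hmem
      obtain ⟨i, hi⟩ := hmem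
      have : Fin.castSucc i = Fin.last s := f.injective hi
      exact (Fin.castSucc_lt_last i).ne this
    -- the equivalence
    have hmemw : ∀ (w : {w : List α // recs w = R}), a ∉ w.1 := by
      intro w hw
      exact haR (w.2 ▸ mem_recs.2 hw)
    let g : {w : List α // recs w = R} × {u : List α // ∀ x ∈ u, x ∈ R ++ [a]}
        → {l : List α // recs l = R ++ [a]} := fun z =>
      ⟨z.1.1 ++ a :: z.2.1, by
        rw [recs_concat_of _ _ (hmemw z.1) ?_, z.1.2]
        intro x hx
        rcases List.mem_append.1 (z.2.2 x hx) with h | h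
        · refine Or.inr (mem_recs.1 ?_)
          rw [z.1.2]
          exact h
        · exact Or.inl (List.mem_singleton.1 h)⟩
    have hg : Function.Bijective g := by
      constructor
      · rintro ⟨w, u⟩ ⟨w', u'⟩ h
        have h' : w.1 ++ a :: u.1 = w'.1 ++ a :: u'.1 := congrArg Subtype.val h
        obtain ⟨h1', h2'⟩ := append_cons_inj (hmemw w) (hmemw w') h'
        simp only [Prod.mk.injEq]
        exact ⟨Subtype.ext h1', Subtype.ext h2'⟩
      · rintro ⟨l, hl⟩
        obtain ⟨w, u, rfl, haw, hwR, hu⟩ := recs_split haR hl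
        refine ⟨⟨⟨w, hwR⟩, ⟨u, ?_⟩⟩, rfl⟩
        intro x hx
        rcases hu x hx with h | h
        · exact List.mem_append.2 (Or.inr (by simp [h]))
        · exact List.mem_append.2 (Or.inl (hwR ▸ mem_recs.2 h))
    rw [h1, tsum_ite_subtype]
    rw [← (Equiv.ofBijective g hg).tsum_eq (fun l => LW q l.1)]
    have hLW : ∀ z, LW q ((g z).1) = LW q z.1.1 * (q a * LW q z.2.1) := by
      intro z
      simp [g, mul_assoc]
    calc ∑' z, LW q ((g z).1)
        = ∑' (w : {w : List α // recs w = R}) (u : {u : List α // ∀ x ∈ u, x ∈ R ++ [a]}),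
            LW q w.1 * (q a * LW q u.1) := by
          simp only [hLW]
          exact ENNReal.tsum_prod
            (f := fun (w : {w : List α // recs w = R})
              (u : {u : List α // ∀ x ∈ u, x ∈ R ++ [a]}) => LW q w.1 * (q a * LW q u.1))
      _ = (∑' w : {w : List α // recs w = R}, LW q w.1)
            * (q a * (∑' u : {u : List α // ∀ x ∈ u, x ∈ R ++ [a]}, LW q u.1)) := by
          simp only [ENNReal.tsum_mul_left]
          exact ENNReal.tsum_mul_right
      _ = ((∏ t, q (f' t)) * ∏ t : Fin s, (1 - ∑ r ∈ Finset.univ.filter (· ≤ t), q (f' r))⁻¹)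
            * (q a * (1 - ∑ x ∈ (R ++ [a]).toFinset, q x)⁻¹) := by
          rw [tsum_list_mem, ← tsum_ite_subtype (fun w => recs w = R), hRdef, ih f']
      _ = (∏ t, q (f t)) * ∏ t : Fin (s+1),
            (1 - ∑ r ∈ Finset.univ.filter (· ≤ t), q (f r))⁻¹ := by
          have hT : (R ++ [a]).toFinset = Finset.image (⇑f) Finset.univ := by
            rw [← h1, ofFn_toFinset]
          have hsum : ∑ x ∈ (R ++ [a]).toFinset, q x = ∑ r : Fin (s+1), q (f r) := by
            rw [hT, Finset.sum_image (fun x _ y _ h => f.injective h)]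
          have hlastfilter :
              (Finset.univ.filter (fun r : Fin (s+1) => r ≤ Fin.last s)) = Finset.univ :=
            Finset.filter_true_of_mem (fun r _ => Fin.le_last r)
          have hcast : ∀ t : Fin s,
              ∑ r ∈ Finset.univ.filter (fun r : Fin (s+1) => r ≤ Fin.castSucc t), q (f r)
                = ∑ r ∈ Finset.univ.filter (fun r : Fin s => r ≤ t), q (f' r) := by
            intro t
            rw [filter_le_castSucc, Finset.sum_map]
            rfl
          rw [Fin.prod_univ_castSucc (fun t : Fin (s+1) => q (f t)),
            Fin.prod_univ_castSucc
              (fun t : Fin (s+1) => (1 - ∑ r ∈ Finset.univ.filter (· ≤ t), q (f r))⁻¹)]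
          have hfc : ∀ t : Fin s, f' t = f t.castSucc := fun t => rfl
          simp only [hcast, hlastfilter, hsum, hfc]
          ring

lemma recs_toFinset (l : List α) : (recs l).toFinset = l.toFinset := by
  ext x
  simp [List.mem_toFinset, mem_recs]

lemma recs_length (l : List α) : (recs l).length = l.toFinset.card := by
  rw [← recs_toFinset, List.toFinset_card_of_nodup (recs_nodup l)]

lemma classify [Fintype α] (k : ℕ) (c : ℝ≥0∞) (l : List α) :
    ∑ s ∈ Finset.range k, ∑ f : Fin s ↪ α, (if recs l = List.ofFn (⇑f) then c else 0)
      = if l.toFinset.card < k then c else 0 := by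
  by_cases hlt : l.toFinset.card < k
  · rw [if_pos hlt]
    have hlen : (recs l).length = l.toFinset.card := recs_length l
    rw [Finset.sum_eq_single (recs l).length]
    · set f₀ : Fin (recs l).length ↪ α :=
        ⟨(recs l).get, List.nodup_iff_injective_get.1 (recs_nodup l)⟩ with hf₀
      rw [Finset.sum_eq_single f₀]
      · rw [if_pos]
        rw [hf₀]
        exact (List.ofFn_get (recs l)).symm
      · intro f _ hf
        rw [if_neg]
        intro hrec
        apply hf
        apply Function.Embedding.coe_injective
        apply List.ofFn_inj.1
        rw [← hrec, hf₀]
        exact (List.ofFn_get (recs l)).symm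
      · intro h
        exact absurd (Finset.mem_univ f₀) h
    · intro s _ hs
      refine Finset.sum_eq_zero fun f _ => ?_
      rw [if_neg]
      intro hrec
      have h2 : (recs l).length = s := by rw [hrec, List.length_ofFn]
      exact hs h2.symm
    · intro h
      exact absurd (Finset.mem_range.2 (hlen ▸ hlt)) h
  · rw [if_neg hlt]
    refine Finset.sum_eq_zero fun s hs => Finset.sum_eq_zero fun f _ => ?_
    rw [if_neg]
    intro hrec
    apply hlt
    have h2 : (recs l).length = s := by rw [hrec, List.length_ofFn]
    rw [← recs_length, h2]
    exact Finset.mem_range.1 hs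

lemma tsum_len [Fintype α] (k : ℕ) :
    ∑' n : ℕ, ∑ v : Fin n → α,
        (if (Finset.image v Finset.univ).card < k then ∏ t, q (v t) else 0)
      = ∑' l : List α, (if l.toFinset.card < k then LW q l else 0) := by
  rw [← (List.equivSigmaTuple (α := α)).symm.tsum_eq
    (fun l => if l.toFinset.card < k then LW q l else 0)]
  rw [ENNReal.tsum_sigma']
  refine tsum_congr fun n => ?_
  rw [tsum_fintype]
  refine Finset.sum_congr rfl fun v _ => ?_
  rw [show (List.equivSigmaTuple (α := α)).symm ⟨n, v⟩ = List.ofFn v from rfl,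
    ofFn_toFinset v, LW_ofFn]

lemma tsum_lists [Fintype α] (k : ℕ) :
    ∑' l : List α, (if l.toFinset.card < k then LW q l else 0)
      = ∑ s ∈ Finset.range k, ∑ f : Fin s ↪ α,
          ((∏ t, q (f t)) * ∏ t : Fin s, (1 - ∑ r ∈ Finset.univ.filter (· ≤ t), q (f r))⁻¹) := by
  calc ∑' l : List α, (if l.toFinset.card < k then LW q l else 0)
      = ∑' l : List α, ∑ s ∈ Finset.range k, ∑ f : Fin s ↪ α,
          (if recs l = List.ofFn (⇑f) then LW q l else 0) :=
        tsum_congr fun l => (classify k (LW q l) l).symm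
    _ = ∑ s ∈ Finset.range k, ∑' l : List α, ∑ f : Fin s ↪ α,
          (if recs l = List.ofFn (⇑f) then LW q l else 0) :=
        Summable.tsum_finsetSum fun _ _ => ENNReal.summable
    _ = ∑ s ∈ Finset.range k, ∑ f : Fin s ↪ α, ∑' l : List α,
          (if recs l = List.ofFn (⇑f) then LW q l else 0) :=
        Finset.sum_congr rfl fun s _ => Summable.tsum_finsetSum fun _ _ => ENNReal.summable
    _ = _ :=
        Finset.sum_congr rfl fun s _ => Finset.sum_congr rfl fun f _ => tsum_recs q s f

end CCAux

section MainA

open MeasureTheory ProbabilityTheory Finset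
open scoped ENNReal

namespace CCAux

lemma enat_tsum_ite (a : ℕ∞) :
    ∑' n : ℕ, (if (n : ℕ∞) < a then (1 : ℝ≥0∞) else 0) = (a : ℝ≥0∞) := by
  induction a using ENat.recTopCoe with
  | top =>
    have : ∀ n : ℕ, (if (n : ℕ∞) < ⊤ then (1 : ℝ≥0∞) else 0) = 1 := fun n =>
      if_pos (lt_top_iff_ne_top.2 (WithTop.coe_ne_top))
    rw [tsum_congr this, ENat.toENNReal_top]
    exact ENNReal.tsum_const_eq_top_of_ne_zero one_ne_zero
  | coe N =>
    rw [tsum_eq_sum (s := Finset.range N) ?_]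
    · rw [ENat.toENNReal_coe]
      have : ∀ n ∈ Finset.range N, (if (n : ℕ∞) < (N : ℕ∞) then (1 : ℝ≥0∞) else 0) = 1 := by
        intro n hn
        exact if_pos (by exact_mod_cast Finset.mem_range.1 hn)
      rw [Finset.sum_congr rfl this]
      simp
    · intro n hn
      exact if_neg (by exact_mod_cast hn ∘ Finset.mem_range.2 ∘ (by exact_mod_cast ·))

lemma numDistinct_mono {m : ℕ} {Ω : Type*} (ξ : ℕ → Ω → Fin m) (ω : Ω) {j n : ℕ}
    (hjn : j ≤ n) : numDistinct ξ j ω ≤ numDistinct ξ n ω := by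
  apply Finset.card_le_card
  intro x hx
  rcases Finset.mem_image.1 hx with ⟨t, _, ht⟩
  exact Finset.mem_image.2 ⟨⟨t.1, lt_of_lt_of_le t.2 hjn⟩, Finset.mem_univ _, ht⟩

lemma lt_drawsNeeded_iff {m : ℕ} {Ω : Type*} (ξ : ℕ → Ω → Fin m) (k n : ℕ) (ω : Ω) :
    (n : ℕ∞) < drawsNeeded ξ k ω ↔ numDistinct ξ n ω < k := by
  constructor
  · intro h
    by_contra hk
    push_neg at hk
    have : drawsNeeded ξ k ω ≤ (n : ℕ∞) := sInf_le ⟨n, hk, rfl⟩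
    exact absurd (lt_of_lt_of_le h this) (lt_irrefl _)
  · intro h
    have h1 : (n : ℕ∞) < ((n + 1 : ℕ) : ℕ∞) := by exact_mod_cast Nat.lt_succ_self n
    refine lt_of_lt_of_le h1 (le_sInf ?_)
    rintro b ⟨j, hj, rfl⟩
    have hnj : n < j := by
      by_contra hc
      push_neg at hc
      exact absurd (lt_of_le_of_lt hj (lt_of_le_of_lt (numDistinct_mono ξ ω hc) h))
        (lt_irrefl _)
    show ((n + 1 : ℕ) : ℕ∞) ≤ (j : ℕ∞)
    exact_mod_cast hnj

end CCAux


section Main2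

open MeasureTheory ProbabilityTheory Finset CCAux
open scoped ENNReal

variable {Ω : Type*} [MeasurableSpace Ω] (μ : Measure Ω) [IsProbabilityMeasure μ]
  {m : ℕ} (p : Fin m → ℝ) (ξ : ℕ → Ω → Fin m)

lemma cylinder_measure (hmeas : ∀ n, Measurable (ξ n))
    (hindep : iIndepFun ξ μ)
    (hdist : ∀ n i, μ {ω | ξ n ω = i} = ENNReal.ofReal (p i))
    (n : ℕ) (v : Fin n → Fin m) :
    μ (⋂ t : Fin n, ξ t ⁻¹' {v t}) = ∏ t : Fin n, ENNReal.ofReal (p (v t)) := by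
  classical
  set sets : ℕ → Set (Fin m) := fun i => if h : i < n then {v ⟨i, h⟩} else Set.univ with hsets
  have hms : ∀ i, i ∈ Finset.range n → MeasurableSet (sets i) := by
    intro i _
    by_cases h : i < n <;> simp [hsets, h]
  have hkey := hindep.measure_inter_preimage_eq_mul (Finset.range n) hms
  have hseteq : (⋂ i ∈ Finset.range n, ξ i ⁻¹' sets i) = ⋂ t : Fin n, ξ t ⁻¹' {v t} := by
    ext ω
    simp only [Set.mem_iInter, Finset.mem_range, Set.mem_preimage]
    constructor
    · intro h t
      have := h t.1 t.2
      rw [hsets] at this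
      simp only [t.2, dif_pos] at this
      simpa using this
    · intro h i hi
      rw [hsets]
      simp only [hi, dif_pos]
      exact h ⟨i, hi⟩
  have hprod : ∏ i ∈ Finset.range n, μ (ξ i ⁻¹' sets i)
      = ∏ t : Fin n, ENNReal.ofReal (p (v t)) := by
    rw [← Fin.prod_univ_eq_prod_range (fun i => μ (ξ i ⁻¹' sets i)) n]
    refine Finset.prod_congr rfl fun t _ => ?_
    have h1 : sets t.1 = {v t} := by
      rw [hsets]
      simp only [t.2, dif_pos]
    rw [h1]
    rw [show (ξ t.1 ⁻¹' {v t}) = {ω | ξ t.1 ω = v t} from rfl]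
    exact hdist t.1 (v t)
  rw [← hseteq, hkey, hprod]

lemma event_measure (hmeas : ∀ n, Measurable (ξ n))
    (hindep : iIndepFun ξ μ)
    (hdist : ∀ n i, μ {ω | ξ n ω = i} = ENNReal.ofReal (p i)) (k n : ℕ) :
    μ {ω | numDistinct ξ n ω < k}
      = ∑ v : Fin n → Fin m, (if (Finset.image v Finset.univ).card < k
          then ∏ t, ENNReal.ofReal (p (v t)) else 0) ∧
    MeasurableSet {ω | numDistinct ξ n ω < k} := by
  classical
  set V : Finset (Fin n → Fin m) :=
    Finset.univ.filter (fun v => (Finset.image v Finset.univ).card < k) with hV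
  have hset : {ω | numDistinct ξ n ω < k} = ⋃ v ∈ V, ⋂ t : Fin n, ξ t ⁻¹' {v t} := by
    ext ω
    simp only [Set.mem_setOf_eq, Set.mem_iUnion, Set.mem_iInter, hV, Finset.mem_filter,
      Finset.mem_univ, true_and, Set.mem_preimage, Set.mem_singleton_iff]
    constructor
    · intro h
      exact ⟨fun t => ξ t ω, h, fun t => rfl⟩
    · rintro ⟨v, hv, hvt⟩
      have hfe : (fun t : Fin n => ξ t ω) = v := funext hvt
      show (Finset.image (fun t : Fin n => ξ t ω) Finset.univ).card < k
      rw [hfe]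
      exact hv
  have hmC : ∀ v : Fin n → Fin m, MeasurableSet (⋂ t : Fin n, ξ t ⁻¹' {v t}) :=
    fun v => MeasurableSet.iInter fun t => (hmeas t) (measurableSet_singleton _)
  constructor
  · rw [hset, measure_biUnion_finset ?_ (fun v _ => hmC v)]
    · rw [hV, Finset.sum_filter]
      refine Finset.sum_congr rfl fun v _ => ?_
      by_cases h : (Finset.image v Finset.univ).card < k
      · rw [if_pos h, if_pos h, cylinder_measure μ p ξ hmeas hindep hdist n v]
      · rw [if_neg h, if_neg h]
    · intro v _ v' _ hne
      rw [Function.onFun, Set.disjoint_left]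
      intro ω hω hω'
      apply hne
      funext t
      have h1 := Set.mem_iInter.1 hω t
      have h2 := Set.mem_iInter.1 hω' t
      rw [Set.mem_preimage, Set.mem_singleton_iff] at h1 h2
      rw [← h1, ← h2]
  · rw [hset]
    exact (V : Finset _).measurableSet_biUnion (fun v _ => hmC v)

end Main2

section Main3

open MeasureTheory ProbabilityTheory Finset CCAux
open scoped ENNReal

variable {m : ℕ} (p : Fin m → ℝ)

lemma denom_pos (hp0 : ∀ i, 0 < p i) (hp1 : ∑ i, p i = 1) {s : ℕ} (hs : s < m)
    (f : Fin s ↪ Fin m) (t : Fin s) :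
    0 < 1 - ∑ r ∈ Finset.univ.filter (· ≤ t), p (f r) := by
  have h1 : ∑ r ∈ Finset.univ.filter (· ≤ t), p (f r) ≤ ∑ r : Fin s, p (f r) :=
    Finset.sum_le_sum_of_subset_of_nonneg (Finset.filter_subset _ _)
      (fun i _ _ => (hp0 _).le)
  have h2 : ∑ r : Fin s, p (f r) = ∑ i ∈ Finset.image (⇑f) Finset.univ, p i :=
    (Finset.sum_image (fun x _ y _ h => f.injective h)).symm
  have hcard : (Finset.image (⇑f) Finset.univ).card = s := by
    rw [Finset.card_image_of_injective _ f.injective, Finset.card_univ, Fintype.card_fin]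
  have hss : Finset.image (⇑f) Finset.univ ⊂ Finset.univ := by
    rw [Finset.ssubset_univ_iff]
    intro h
    rw [h, Finset.card_univ, Fintype.card_fin] at hcard
    omega
  obtain ⟨i₀, hi₀u, hi₀⟩ := Finset.exists_of_ssubset hss
  have h3 : ∑ i ∈ Finset.image (⇑f) Finset.univ, p i < ∑ i, p i :=
    Finset.sum_lt_sum_of_subset (Finset.subset_univ _) hi₀u hi₀ (hp0 i₀)
      (fun j _ _ => (hp0 j).le)
  have := hp1 ▸ h3
  linarith

lemma nested_nonneg (hp0 : ∀ i, 0 < p i) (hp1 : ∑ i, p i = 1) {s : ℕ} (hs : s < m)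
    (f : Fin s ↪ Fin m) : 0 ≤ nestedTerm p s f := by
  apply div_nonneg
  · exact Finset.prod_nonneg fun t _ => (hp0 _).le
  · exact Finset.prod_nonneg fun t _ => (denom_pos p hp0 hp1 hs f t).le

lemma nested_ofReal (hp0 : ∀ i, 0 < p i) (hp1 : ∑ i, p i = 1) {s : ℕ} (hs : s < m)
    (f : Fin s ↪ Fin m) :
    (∏ t, ENNReal.ofReal (p (f t)))
        * ∏ t : Fin s, (1 - ∑ r ∈ Finset.univ.filter (· ≤ t), ENNReal.ofReal (p (f r)))⁻¹
      = ENNReal.ofReal (nestedTerm p s f) := by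
  have hσ : ∀ t : Fin s, (0:ℝ) ≤ ∑ r ∈ Finset.univ.filter (· ≤ t), p (f r) :=
    fun t => Finset.sum_nonneg fun r _ => (hp0 _).le
  have e1 : ∀ t : Fin s,
      (1 - ∑ r ∈ Finset.univ.filter (· ≤ t), ENNReal.ofReal (p (f r)))⁻¹
        = ENNReal.ofReal ((1 - ∑ r ∈ Finset.univ.filter (· ≤ t), p (f r))⁻¹) := by
    intro t
    rw [← ENNReal.ofReal_sum_of_nonneg (fun r _ => (hp0 _).le), ← ENNReal.ofReal_one,
      ← ENNReal.ofReal_sub _ (hσ t), ← ENNReal.ofReal_inv_of_pos (denom_pos p hp0 hp1 hs f t)]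
  rw [Finset.prod_congr rfl (fun t _ => e1 t),
    ← ENNReal.ofReal_prod_of_nonneg (fun t _ => inv_nonneg.2 (denom_pos p hp0 hp1 hs f t).le),
    ← ENNReal.ofReal_prod_of_nonneg (fun t _ => (hp0 _).le),
    ← ENNReal.ofReal_mul (Finset.prod_nonneg fun t _ => (hp0 _).le)]
  congr 1
  rw [nestedTerm, div_eq_mul_inv, ← Finset.prod_inv_distrib]

end Main3


end MainA

section FinalProof

open CCAux

/-- For 1 ≤ k ≤ m, the expected minimum number of draws needed to observe
k distinct values is 1 + Σ_{i₁} p_{i₁}/p(i₁) + ⋯ +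
Σ_{i₁,…,i_{k−1} distinct} p_{i₁}⋯p_{i_{k−1}}/(p(i₁)⋯p(i₁,…,i_{k−1})). -/
theorem expected_draws_for_k_records
    {Ω : Type*} [MeasurableSpace Ω] (μ : Measure Ω) [IsProbabilityMeasure μ]
    {m : ℕ} (p : Fin m → ℝ) (hp0 : ∀ i, 0 < p i) (hp1 : ∑ i, p i = 1)
    (ξ : ℕ → Ω → Fin m) (hmeas : ∀ n, Measurable (ξ n))
    (hindep : iIndepFun ξ μ)
    (hdist : ∀ n i, μ {ω | ξ n ω = i} = ENNReal.ofReal (p i))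
    (k : ℕ) (hk : 1 ≤ k) (hkm : k ≤ m) :
    ∫⁻ ω, (drawsNeeded ξ k ω : ℝ≥0∞) ∂μ
      = ENNReal.ofReal (∑ s ∈ Finset.range k, nestedSum p s) := by
  classical
  have hevent := fun n => event_measure μ p ξ hmeas hindep hdist k n
  calc ∫⁻ ω, ((drawsNeeded ξ k ω : ℕ∞) : ℝ≥0∞) ∂μ
      = ∫⁻ ω, ∑' n : ℕ,
          Set.indicator {ω' | numDistinct ξ n ω' < k} (fun _ => (1:ℝ≥0∞)) ω ∂μ := by
        refine lintegral_congr fun ω => ?_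
        rw [← enat_tsum_ite (drawsNeeded ξ k ω)]
        refine tsum_congr fun n => ?_
        rw [Set.indicator_apply]
        simp only [Set.mem_setOf_eq]
        by_cases h : numDistinct ξ n ω < k
        · rw [if_pos ((lt_drawsNeeded_iff ξ k n ω).2 h), if_pos h]
        · rw [if_neg (fun hlt => h ((lt_drawsNeeded_iff ξ k n ω).1 hlt)), if_neg h]
    _ = ∑' n : ℕ, ∫⁻ ω,
          Set.indicator {ω' | numDistinct ξ n ω' < k} (fun _ => (1:ℝ≥0∞)) ω ∂μ :=
        lintegral_tsum (fun n => (measurable_const.indicator (hevent n).2).aemeasurable)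
    _ = ∑' n : ℕ, μ {ω | numDistinct ξ n ω < k} :=
        tsum_congr fun n => lintegral_indicator_one (hevent n).2
    _ = ∑' n : ℕ, ∑ v : Fin n → Fin m,
          (if (Finset.image v Finset.univ).card < k
            then ∏ t, ENNReal.ofReal (p (v t)) else 0) :=
        tsum_congr fun n => (hevent n).1
    _ = ∑ s ∈ Finset.range k, ∑ f : Fin s ↪ Fin m,
          ((∏ t, ENNReal.ofReal (p (f t)))
            * ∏ t : Fin s, (1 - ∑ r ∈ Finset.univ.filter (· ≤ t),
                ENNReal.ofReal (p (f r)))⁻¹) :=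
        (tsum_len (fun i => ENNReal.ofReal (p i)) k).trans
          (tsum_lists (fun i => ENNReal.ofReal (p i)) k)
    _ = ∑ s ∈ Finset.range k, ∑ f : Fin s ↪ Fin m, ENNReal.ofReal (nestedTerm p s f) := by
        refine Finset.sum_congr rfl fun s hs => Finset.sum_congr rfl fun f _ => ?_
        exact nested_ofReal p hp0 hp1 (lt_of_lt_of_le (Finset.mem_range.1 hs) hkm) f
    _ = ENNReal.ofReal (∑ s ∈ Finset.range k, nestedSum p s) := by
        rw [ENNReal.ofReal_sum_of_nonneg]
        · refine Finset.sum_congr rfl fun s hs => ?_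
          rw [nestedSum, ENNReal.ofReal_sum_of_nonneg]
          intro f _
          exact nested_nonneg p hp0 hp1 (lt_of_lt_of_le (Finset.mem_range.1 hs) hkm) f
        · intro s hs
          refine Finset.sum_nonneg fun f _ => ?_
          exact nested_nonneg p hp0 hp1 (lt_of_lt_of_le (Finset.mem_range.1 hs) hkm) f

end FinalProof
end

section
/- Let ξ₁, ξ₂, … be i.i.d. draws from a discrete distribution on S = {1,…,m} with density p (all p_i > 0), let Y_i be the first time the value i appears in the sequence, and let Y = max{Y₁,…,Y_m} be the waiting time until all m values have been observed. Then E[Y] = Σ_i 1/p_i − Σ_{i<j} 1/(p_i+p_j) + Σ_{i<j<k} 1/(p_i+p_j+p_k) − ⋯ + (−1)^{m+1} · 1/(p_1+⋯+p_m). -/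
open MeasureTheory ProbabilityTheory Finset
open scoped ENNReal

lemma firstHit_gt_iff {m : ℕ} {Ω : Type*} (ξ : ℕ → Ω → Fin m) (i : Fin m) (ω : Ω) (n : ℕ) :
    (n : ℕ∞) < firstHit ξ i ω ↔ ∀ t < n, ξ t ω ≠ i := by
  constructor
  · intro h t ht heq
    have hle : firstHit ξ i ω ≤ (t : ℕ∞) + 1 := sInf_le ⟨t, heq, rfl⟩
    have h2 : (n : ℕ∞) < (t : ℕ∞) + 1 := lt_of_lt_of_le h hle
    rw [show ((t : ℕ∞) + 1) = ((t + 1 : ℕ) : ℕ∞) by push_cast; ring, Nat.cast_lt] at h2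
    omega
  · intro h
    have hle : ((n + 1 : ℕ) : ℕ∞) ≤ firstHit ξ i ω := by
      apply le_sInf
      rintro x ⟨t, ht, rfl⟩
      have hnt : n ≤ t := by
        by_contra hc
        exact h t (by omega) ht
      show ((n + 1 : ℕ) : ℕ∞) ≤ (t : ℕ∞) + 1
      rw [show ((t : ℕ∞) + 1) = ((t + 1 : ℕ) : ℕ∞) by push_cast; ring, Nat.cast_le]
      omega
    exact lt_of_lt_of_le (by exact_mod_cast Nat.lt_succ_self n) hle

lemma enat_coe_eq_tsum (a : ℕ∞) :
    (a : ℝ≥0∞) = ∑' n : ℕ, if (n : ℕ∞) < a then 1 else 0 := by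
  cases a with
  | top =>
    have h1 : ∀ n : ℕ, (if (n : ℕ∞) < ⊤ then (1:ℝ≥0∞) else 0) = 1 := by
      intro n; simp [lt_top_iff_ne_top]
    simp only [h1, ENat.toENNReal_top]
    exact (ENNReal.tsum_const_eq_top_of_ne_zero one_ne_zero).symm
  | coe k =>
    rw [tsum_eq_sum (s := Finset.range k) (by
      intro n hn
      have : ¬ (n : ℕ∞) < (k : ℕ∞) := by
        simp only [Nat.cast_lt, not_lt]
        exact le_of_not_gt (fun h => hn (Finset.mem_range.2 h))
      simp [this])]
    have h2 : ∀ n ∈ Finset.range k, (if (n : ℕ∞) < (k : ℕ∞) then (1:ℝ≥0∞) else 0) = 1 := by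
      intro n hn
      simp [Nat.cast_lt.2 (Finset.mem_range.1 hn)]
    rw [Finset.sum_congr rfl h2]
    simp [ENat.toENNReal_coe]

lemma incl_excl_measure {Ω : Type*} [MeasurableSpace Ω] (μ : Measure Ω) [IsFiniteMeasure μ]
    {ι : Type*} [DecidableEq ι] (s : Finset ι) (E : ι → Set Ω) (hE : ∀ i, MeasurableSet (E i)) :
    (μ (⋃ i ∈ s, E i)).toReal
      = ∑ A ∈ s.powerset, (if A.Nonempty then
          (-1 : ℝ) ^ (A.card + 1) * (μ (⋂ i ∈ A, E i)).toReal else 0) := by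
  induction s using Finset.induction_on generalizing E with
  | empty => simp
  | @insert a s ha IH =>
    have hU : MeasurableSet (⋃ i ∈ s, E i) :=
      MeasurableSet.biUnion s.countable_toSet (fun i _ => hE i)
    have key := measure_union_add_inter (μ := μ) (E a) hU
    have h1 : (μ (E a ∪ ⋃ i ∈ s, E i)).toReal
        = (μ (E a)).toReal + (μ (⋃ i ∈ s, E i)).toReal - (μ (E a ∩ ⋃ i ∈ s, E i)).toReal := by
      have := congrArg ENNReal.toReal key
      rw [ENNReal.toReal_add (measure_ne_top _ _) (measure_ne_top _ _),
        ENNReal.toReal_add (measure_ne_top _ _) (measure_ne_top _ _)] at this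
      linarith
    have hinter : E a ∩ ⋃ i ∈ s, E i = ⋃ i ∈ s, (E a ∩ E i) := by
      rw [Set.inter_iUnion₂]
    have hIH1 := IH E hE
    have hIH2 := IH (fun i => E a ∩ E i) (fun i => (hE a).inter (hE i))
    rw [Finset.set_biUnion_insert, h1, hIH1, hinter, hIH2,
      Finset.sum_powerset_insert ha]
    have step : ∀ A ∈ s.powerset,
        (if A.Nonempty then
          (-1 : ℝ) ^ (A.card + 1) * (μ (⋂ i ∈ A, (E a ∩ E i))).toReal else 0)
        + (if (insert a A).Nonempty then
            (-1 : ℝ) ^ ((insert a A).card + 1) * (μ (⋂ i ∈ insert a A, E i)).toReal else 0)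
        = (if A = ∅ then (μ (E a)).toReal else 0) := by
      intro A hA
      have haA : a ∉ A := fun h => ha (Finset.mem_powerset.1 hA h)
      have hcard : (insert a A).card = A.card + 1 := Finset.card_insert_of_notMem haA
      have hins : (⋂ i ∈ insert a A, E i) = E a ∩ ⋂ i ∈ A, E i := Finset.set_biInter_insert a A E
      rcases A.eq_empty_or_nonempty with rfl | hAne
      · simp [hins]
      · have hAeq : (⋂ i ∈ A, (E a ∩ E i)) = E a ∩ ⋂ i ∈ A, E i := by
          obtain ⟨x, hx⟩ := hAne
          ext ω
          simp only [Set.mem_iInter, Set.mem_inter_iff]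
          exact ⟨fun h => ⟨(h x hx).1, fun i hi => (h i hi).2⟩,
            fun h i hi => ⟨h.1, h.2 i hi⟩⟩
        have hAne' : A ≠ ∅ := hAne.ne_empty
        simp only [hAne, Finset.insert_nonempty, if_true, hAne', if_false, hcard, hins, hAeq]
        ring
    calc (μ (E a)).toReal
          + ∑ A ∈ s.powerset, (if A.Nonempty then
              (-1 : ℝ) ^ (A.card + 1) * (μ (⋂ i ∈ A, E i)).toReal else 0)
          - ∑ A ∈ s.powerset, (if A.Nonempty then
              (-1 : ℝ) ^ (A.card + 1) * (μ (⋂ i ∈ A, (E a ∩ E i))).toReal else 0)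
        = ∑ A ∈ s.powerset, (if A.Nonempty then
              (-1 : ℝ) ^ (A.card + 1) * (μ (⋂ i ∈ A, E i)).toReal else 0)
          + ((μ (E a)).toReal
          - ∑ A ∈ s.powerset, (if A.Nonempty then
              (-1 : ℝ) ^ (A.card + 1) * (μ (⋂ i ∈ A, (E a ∩ E i))).toReal else 0)) := by ring
      _ = ∑ A ∈ s.powerset, (if A.Nonempty then
              (-1 : ℝ) ^ (A.card + 1) * (μ (⋂ i ∈ A, E i)).toReal else 0)
          + ∑ A ∈ s.powerset, (if (insert a A).Nonempty then
              (-1 : ℝ) ^ ((insert a A).card + 1) * (μ (⋂ i ∈ insert a A, E i)).toReal else 0) := by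
        congr 1
        have hsum := Finset.sum_congr rfl step
        rw [Finset.sum_add_distrib] at hsum
        have hempty : ∑ A ∈ s.powerset, (if A = ∅ then (μ (E a)).toReal else 0)
            = (μ (E a)).toReal := by
          rw [Finset.sum_ite_eq' s.powerset ∅ (fun _ => (μ (E a)).toReal)]
          simp
        rw [hempty] at hsum
        linarith

/-- The expected waiting time Y = max{Y₁,…,Yₘ} until all m values have been
observed equals the inclusion–exclusion sum
Σᵢ 1/pᵢ − Σ_{i<j} 1/(pᵢ+pⱼ) + ⋯ + (−1)^{m+1}/(p₁+⋯+pₘ). -/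
theorem expected_time_to_complete_collection
    {Ω : Type*} [MeasurableSpace Ω] (μ : Measure Ω) [IsProbabilityMeasure μ]
    {m : ℕ} (p : Fin m → ℝ) (hp0 : ∀ i, 0 < p i) (hp1 : ∑ i, p i = 1)
    (ξ : ℕ → Ω → Fin m) (hmeas : ∀ n, Measurable (ξ n))
    (hindep : iIndepFun ξ μ)
    (hdist : ∀ n i, μ {ω | ξ n ω = i} = ENNReal.ofReal (p i)) :
    ∫⁻ ω, ((⨆ i, firstHit ξ i ω : ℕ∞) : ℝ≥0∞) ∂μ
      = ENNReal.ofReal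
          (∑ A ∈ Finset.univ.powerset.filter (fun A : Finset (Fin m) => A.Nonempty),
            (-1 : ℝ) ^ (A.card + 1) * (∑ i ∈ A, p i)⁻¹) := by
  classical
  -- basic facts about p
  have hq0 : ∀ A : Finset (Fin m), 0 ≤ ∑ i ∈ A, p i :=
    fun A => Finset.sum_nonneg fun i _ => (hp0 i).le
  have hqle : ∀ A : Finset (Fin m), (∑ i ∈ A, p i) ≤ 1 := by
    intro A
    rw [← hp1]
    exact Finset.sum_le_sum_of_subset_of_nonneg (Finset.subset_univ A)
      (fun i _ _ => (hp0 i).le)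
  have hqpos : ∀ A : Finset (Fin m), A.Nonempty → 0 < ∑ i ∈ A, p i := by
    rintro A ⟨x, hx⟩
    exact Finset.sum_pos' (fun i _ => (hp0 i).le) ⟨x, hx, hp0 x⟩
  -- the events
  set T : ℕ → Fin m → Set Ω := fun n i => ⋂ t ∈ Finset.range n, {ω | ξ t ω ≠ i} with hT
  set Sev : ℕ → Set Ω := fun n => {ω | (n : ℕ∞) < ⨆ i, firstHit ξ i ω} with hSev
  have hTmeas : ∀ n i, MeasurableSet (T n i) := by
    intro n i
    exact MeasurableSet.biInter (Finset.range n).countable_toSet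
      (fun t _ => (hmeas t (measurableSet_singleton i)).compl)
  have hS : ∀ n, Sev n = ⋃ i ∈ (Finset.univ : Finset (Fin m)), T n i := by
    intro n
    ext ω
    simp only [hSev, hT, Set.mem_setOf_eq, lt_iSup_iff, Set.mem_iUnion, Set.mem_iInter,
      Finset.mem_range, Finset.mem_univ, exists_true_left, exists_prop, true_and]
    constructor
    · rintro ⟨i, hi⟩
      exact ⟨i, fun t ht => (firstHit_gt_iff ξ i ω n).1 hi t ht⟩
    · rintro ⟨i, hi⟩
      exact ⟨i, (firstHit_gt_iff ξ i ω n).2 hi⟩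
  have hSmeas : ∀ n, MeasurableSet (Sev n) := by
    intro n
    rw [hS n]
    exact MeasurableSet.biUnion (Finset.univ : Finset (Fin m)).countable_toSet
      (fun i _ => hTmeas n i)
  -- measure of intersections
  have hTA : ∀ (n : ℕ) (A : Finset (Fin m)),
      μ (⋂ i ∈ A, T n i) = ENNReal.ofReal ((1 - ∑ i ∈ A, p i) ^ n) := by
    intro n A
    have hset : (⋂ i ∈ A, T n i) = ⋂ t ∈ Finset.range n, ξ t ⁻¹' (↑A : Set (Fin m))ᶜ := by
      ext ω
      simp only [hT, Set.mem_iInter, Set.mem_setOf_eq, Set.mem_preimage, Set.mem_compl_iff,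
        Finset.mem_coe]
      exact ⟨fun h t ht hA => h _ hA t ht rfl,
        fun h i hi t ht heq => h t ht (heq ▸ hi)⟩
    have hsingle : ∀ t : ℕ, μ (ξ t ⁻¹' (↑A : Set (Fin m))ᶜ)
        = ENNReal.ofReal (1 - ∑ i ∈ A, p i) := by
      intro t
      have hAmeas : μ (ξ t ⁻¹' (↑A : Set (Fin m))) = ENNReal.ofReal (∑ i ∈ A, p i) := by
        have h2 : ξ t ⁻¹' (↑A : Set (Fin m)) = ⋃ i ∈ A, {ω | ξ t ω = i} := by
          ext ω; simp
        have hd : (↑A : Set (Fin m)).PairwiseDisjoint (fun i => {ω | ξ t ω = i}) := by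
          intro i _ j _ hij
          simp only [Function.onFun, Set.disjoint_left, Set.mem_setOf_eq]
          rintro ω ha hb
          exact hij (ha ▸ hb ▸ rfl)
        have h4 := measure_biUnion_finset (μ := μ) hd
          (fun i _ => hmeas t (measurableSet_singleton i))
        rw [h2, h4, Finset.sum_congr rfl (fun i _ => hdist t i)]
        exact (ENNReal.ofReal_sum_of_nonneg (fun i _ => (hp0 i).le)).symm
      have h3 : ξ t ⁻¹' (↑A : Set (Fin m))ᶜ = (ξ t ⁻¹' (↑A : Set (Fin m)))ᶜ := rfl
      rw [h3, measure_compl (hmeas t ((Set.toFinite _).measurableSet)) (measure_ne_top μ _),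
        measure_univ, hAmeas, ← ENNReal.ofReal_one, ← ENNReal.ofReal_sub _ (hq0 A)]
    rw [hset, hindep.measure_inter_preimage_eq_mul (Finset.range n)
      (fun _ _ => (Set.toFinite _).measurableSet),
      Finset.prod_congr rfl (fun t _ => hsingle t), Finset.prod_const, Finset.card_range,
      ← ENNReal.ofReal_pow (by linarith [hqle A])]
  -- the coefficient function
  set c : Finset (Fin m) → ℝ := fun A => if A.Nonempty then (-1 : ℝ) ^ (A.card + 1) else 0
    with hc
  set g : ℕ → ℝ := fun n =>
    ∑ A ∈ (Finset.univ : Finset (Fin m)).powerset, c A * (1 - ∑ i ∈ A, p i) ^ n with hg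
  -- measure of the events
  have hgn : ∀ n, g n = (μ (Sev n)).toReal := by
    intro n
    have h1 := incl_excl_measure μ (Finset.univ : Finset (Fin m)) (T n) (hTmeas n)
    rw [← hS n] at h1
    have h2 : ∀ A ∈ (Finset.univ : Finset (Fin m)).powerset,
        (if A.Nonempty then (-1 : ℝ) ^ (A.card + 1) * (μ (⋂ i ∈ A, T n i)).toReal else 0)
        = c A * (1 - ∑ i ∈ A, p i) ^ n := by
      intro A _
      rw [hTA n A, ENNReal.toReal_ofReal (pow_nonneg (by linarith [hqle A]) n)]
      by_cases hA : A.Nonempty <;> simp [hc, hA]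
    rw [Finset.sum_congr rfl h2] at h1
    exact h1.symm
  have hmeasS : ∀ n, μ (Sev n) = ENNReal.ofReal (g n) := by
    intro n
    rw [hgn n, ENNReal.ofReal_toReal (measure_ne_top μ _)]
  have hgnonneg : ∀ n, 0 ≤ g n := fun n => (hgn n) ▸ ENNReal.toReal_nonneg
  -- summability
  have hsummA : ∀ A ∈ (Finset.univ : Finset (Fin m)).powerset,
      Summable (fun n : ℕ => c A * (1 - ∑ i ∈ A, p i) ^ n) := by
    intro A _
    by_cases hA : A.Nonempty
    · exact (summable_geometric_of_lt_one (by linarith [hqle A])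
        (by linarith [hqpos A hA])).mul_left _
    · simp only [hc, hA, if_false, zero_mul]
      exact summable_zero
  have hgsum : Summable g :=
    (hasSum_sum fun A hA => (hsummA A hA).hasSum).summable
  have htsum : ∑' n, g n
      = ∑ A ∈ (Finset.univ : Finset (Fin m)).powerset, c A * (∑ i ∈ A, p i)⁻¹ := by
    rw [show (∑' n, g n)
        = ∑' n : ℕ, ∑ A ∈ (Finset.univ : Finset (Fin m)).powerset,
            c A * (1 - ∑ i ∈ A, p i) ^ n from rfl,
      Summable.tsum_finsetSum hsummA]
    refine Finset.sum_congr rfl fun A _ => ?_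
    rw [tsum_mul_left]
    by_cases hA : A.Nonempty
    · rw [tsum_geometric_of_lt_one (by linarith [hqle A]) (by linarith [hqpos A hA]),
        show (1 - (1 - ∑ i ∈ A, p i)) = ∑ i ∈ A, p i by ring]
    · simp [hc, hA]
  -- pointwise layer-cake
  have hpoint : ∀ ω, ((⨆ i, firstHit ξ i ω : ℕ∞) : ℝ≥0∞)
      = ∑' n : ℕ, (Sev n).indicator (fun _ => (1 : ℝ≥0∞)) ω := by
    intro ω
    rw [enat_coe_eq_tsum]
    refine tsum_congr fun n => ?_
    by_cases h : ω ∈ Sev n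
    · rw [Set.indicator_of_mem h]
      simp only [hSev, Set.mem_setOf_eq] at h
      rw [if_pos h]
    · rw [Set.indicator_of_notMem h]
      simp only [hSev, Set.mem_setOf_eq] at h
      rw [if_neg h]
  calc ∫⁻ ω, ((⨆ i, firstHit ξ i ω : ℕ∞) : ℝ≥0∞) ∂μ
      = ∫⁻ ω, ∑' n : ℕ, (Sev n).indicator (fun _ => (1:ℝ≥0∞)) ω ∂μ := lintegral_congr hpoint
    _ = ∑' n : ℕ, ∫⁻ ω, (Sev n).indicator (fun _ => (1:ℝ≥0∞)) ω ∂μ :=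
        lintegral_tsum (fun n => (measurable_const.indicator (hSmeas n)).aemeasurable)
    _ = ∑' n : ℕ, μ (Sev n) := tsum_congr fun n => lintegral_indicator_one (hSmeas n)
    _ = ∑' n : ℕ, ENNReal.ofReal (g n) := tsum_congr fun n => hmeasS n
    _ = ENNReal.ofReal (∑' n, g n) := (ENNReal.ofReal_tsum_of_nonneg hgnonneg hgsum).symm
    _ = ENNReal.ofReal
          (∑ A ∈ (Finset.univ : Finset (Fin m)).powerset, c A * (∑ i ∈ A, p i)⁻¹) := by
        rw [htsum]
    _ = _ := by
        congr 1
        rw [Finset.sum_filter]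
        refine Finset.sum_congr rfl fun A _ => ?_
        by_cases hA : A.Nonempty <;> simp [hc, hA]
end

section
/- Let ξ₁, ξ₂, … be i.i.d. draws from a discrete distribution on S = {1,…,m} with density p (all p_i > 0), and let Z_j denote the type of the j-th distinct value observed, in order of appearance. Then for any 2 ≤ s ≤ m and pairwise distinct indices i₁,…,i_s ∈ S, P[Z_s = i_s | Z₁ = i₁, …, Z_{s−1} = i_{s−1}] = p_{i_s}/(1 − p_{i₁} − ⋯ − p_{i_{s−1}}), and consequently P[Z₁ = i₁, …, Z_s = i_s] = p_{i₁} · (p_{i₂}/p(i₁)) · ⋯ · (p_{i_s}/p(i₁,…,i_{s−1})), where p(i₁,…,i_r) = 1 − p_{i₁} − ⋯ − p_{i_r}. -/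
open MeasureTheory ProbabilityTheory Finset
open scoped ENNReal

namespace RJL

open Finset

/-! ### Deterministic combinatorics of records -/

variable {m : ℕ}

/-- The set of distinct values among the first `n` entries of `x`. -/
def dSet (x : ℕ → Fin m) (n : ℕ) : Finset (Fin m) :=
  Finset.image (fun t : Fin n => x t) Finset.univ

lemma mem_dSet {x : ℕ → Fin m} {n : ℕ} {a : Fin m} :
    a ∈ dSet x n ↔ ∃ t < n, x t = a := by
  simp only [dSet, mem_image, mem_univ, true_and]
  constructor
  · rintro ⟨t, rfl⟩; exact ⟨t, t.isLt, rfl⟩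
  · rintro ⟨t, ht, rfl⟩; exact ⟨⟨t, ht⟩, rfl⟩

lemma dSet_zero (x : ℕ → Fin m) : dSet x 0 = ∅ := by
  ext a; simp [mem_dSet]

lemma dSet_succ (x : ℕ → Fin m) (n : ℕ) :
    dSet x (n + 1) = insert (x n) (dSet x n) := by
  ext a
  simp only [mem_dSet, mem_insert]
  constructor
  · rintro ⟨t, ht, rfl⟩
    rcases Nat.lt_succ_iff_lt_or_eq.mp ht with h | rfl
    · exact Or.inr ⟨t, h, rfl⟩
    · exact Or.inl rfl
  · rintro (rfl | ⟨t, ht, rfl⟩)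
    · exact ⟨n, Nat.lt_succ_self n, rfl⟩
    · exact ⟨t, Nat.lt_succ_of_lt ht, rfl⟩

lemma dSet_one (x : ℕ → Fin m) : dSet x 1 = {x 0} := by
  rw [show (1 : ℕ) = 0 + 1 from rfl, dSet_succ, dSet_zero]; rfl

lemma dSet_mono (x : ℕ → Fin m) : Monotone (dSet x) := by
  intro n n' h a ha
  rw [mem_dSet] at ha ⊢
  obtain ⟨t, ht, rfl⟩ := ha
  exact ⟨t, lt_of_lt_of_le ht h, rfl⟩

/-- The number of distinct values among the first `n` entries of `x`. -/
def cnt (x : ℕ → Fin m) (n : ℕ) : ℕ := (dSet x n).card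

lemma cnt_mono (x : ℕ → Fin m) : Monotone (cnt x) :=
  fun _ _ h => Finset.card_le_card (dSet_mono x h)

lemma cnt_succ_le (x : ℕ → Fin m) (n : ℕ) : cnt x (n + 1) ≤ cnt x n + 1 := by
  rw [cnt, cnt, dSet_succ]; exact card_insert_le _ _

lemma cnt_one (x : ℕ → Fin m) : cnt x 1 = 1 := by
  rw [cnt, dSet_one, card_singleton]

/-- First time (index of draw) at which `j` distinct values have been seen. -/
noncomputable def N (x : ℕ → Fin m) (j : ℕ) : ℕ := sInf {n | j ≤ cnt x (n + 1)}

lemma N_one (x : ℕ → Fin m) : N x 1 = 0 :=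
  Nat.eq_zero_of_le_zero (Nat.sInf_le (by simp [cnt_one]))

/-- Record times encoded through gap variables: `T g j` is the time of the `j`-th record
when the gaps between consecutive records are given by `g`. -/
def T (g : ℕ → ℕ) (j : ℕ) : ℕ := j + ∑ r ∈ Finset.range j, g r

lemma T_zero (g : ℕ → ℕ) : T g 0 = 0 := by simp [T]

lemma T_succ (g : ℕ → ℕ) (j : ℕ) : T g (j + 1) = T g j + g j + 1 := by
  simp only [T, Finset.sum_range_succ]; omega

lemma T_strictMono (g : ℕ → ℕ) : StrictMono (T g) :=
  strictMono_nat_of_lt_succ fun n => by rw [T_succ]; omega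

lemma T_congr {K : ℕ} {g g' : ℕ → ℕ} (hgg : ∀ r < K, g r = g' r) :
    ∀ j ≤ K, T g j = T g' j := by
  intro j hj
  unfold T
  congr 1
  refine Finset.sum_congr rfl fun r hr => ?_
  exact hgg r (lt_of_lt_of_le (Finset.mem_range.mp hr) hj)

/-- Index of the last record at or before time `t`. -/
noncomputable def jdx (K : ℕ) (g : ℕ → ℕ) (t : ℕ) : ℕ := sSup {j | j ≤ K ∧ T g j ≤ t}

lemma jdx_spec (K : ℕ) (g : ℕ → ℕ) (t : ℕ) : jdx K g t ≤ K ∧ T g (jdx K g t) ≤ t := by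
  have h1 : ({j | j ≤ K ∧ T g j ≤ t}).Nonempty :=
    ⟨0, Nat.zero_le _, by rw [T_zero]; exact Nat.zero_le _⟩
  have h2 : BddAbove {j | j ≤ K ∧ T g j ≤ t} := ⟨K, fun j hj => hj.1⟩
  exact Nat.sSup_mem h1 h2

lemma le_jdx {K : ℕ} {g : ℕ → ℕ} {t j : ℕ} (hj : j ≤ K) (ht : T g j ≤ t) :
    j ≤ jdx K g t :=
  le_csSup ⟨K, fun _ hj' => hj'.1⟩ ⟨hj, ht⟩

lemma jdx_eq {K : ℕ} {g : ℕ → ℕ} {t j : ℕ} (hj : j ≤ K) (ht : T g j = t) :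
    jdx K g t = j := by
  refine le_antisymm ?_ (le_jdx hj ht.le)
  by_contra h
  push_neg at h
  have h1 := (T_strictMono g) h
  have h2 := (jdx_spec K g t).2
  omega

/-- The constraint placed on the value at time `t`, for gap pattern `g`. -/
noncomputable def CC {K : ℕ} (f : Fin (K + 1) ↪ Fin m) (g : ℕ → ℕ) (t : ℕ) :
    Finset (Fin m) :=
  if h : ∃ j : Fin (K + 1), T g (j : ℕ) = t then {f h.choose}
  else (Finset.univ.filter fun r : Fin (K + 1) => T g (r : ℕ) < t).image f

lemma CC_eq {K : ℕ} (f : Fin (K + 1) ↪ Fin m) (g : ℕ → ℕ) {t : ℕ} (j : Fin (K + 1))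
    (hj : T g (j : ℕ) = t) : CC f g t = {f j} := by
  have hex : ∃ j : Fin (K + 1), T g (j : ℕ) = t := ⟨j, hj⟩
  rw [CC, dif_pos hex]
  have h2 : hex.choose = j :=
    Fin.ext ((T_strictMono g).injective (hex.choose_spec.trans hj.symm))
  rw [h2]

lemma CC_ne {K : ℕ} (f : Fin (K + 1) ↪ Fin m) (g : ℕ → ℕ) {t : ℕ}
    (h : ¬∃ j : Fin (K + 1), T g (j : ℕ) = t) :
    CC f g t = (Finset.univ.filter fun r : Fin (K + 1) => T g (r : ℕ) < t).image f :=
  dif_neg h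

lemma CC_congr {K : ℕ} (f : Fin (K + 1) ↪ Fin m) {g g' : ℕ → ℕ}
    (hgg : ∀ r < K, g r = g' r) (t : ℕ) : CC f g t = CC f g' t := by
  have hT : ∀ j : Fin (K + 1), T g (j : ℕ) = T g' (j : ℕ) := fun j =>
    T_congr hgg _ (Nat.lt_succ_iff.mp j.isLt)
  by_cases hex : ∃ j : Fin (K + 1), T g (j : ℕ) = t
  · obtain ⟨j, hj⟩ := hex
    rw [CC_eq f g j hj, CC_eq f g' j ((hT j).symm.trans hj)]
  · rw [CC_ne f g hex, CC_ne f g' (by simpa only [← hT] using hex)]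
    congr 1
    ext r
    simp only [mem_filter, mem_univ, true_and, hT r]

lemma filter_T_lt {K : ℕ} (g : ℕ → ℕ) {t : ℕ}
    (h : ¬∃ j : Fin (K + 1), T g (j : ℕ) = t) :
    (Finset.univ.filter fun r : Fin (K + 1) => T g (r : ℕ) < t)
      = Finset.univ.filter fun r : Fin (K + 1) => (r : ℕ) ≤ jdx K g t := by
  ext r
  simp only [mem_filter, mem_univ, true_and]
  constructor
  · intro hr
    exact le_jdx (Nat.lt_succ_iff.mp r.isLt) hr.le
  · intro hr
    have h1 : T g (r : ℕ) ≤ T g (jdx K g t) := (T_strictMono g).monotone hr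
    have h2 := (jdx_spec K g t).2
    have h3 : T g (r : ℕ) ≠ t := fun hc => h ⟨r, hc⟩
    omega

lemma card_filter_le_val {n v : ℕ} (hv : v < n) :
    (Finset.univ.filter fun r : Fin n => (r : ℕ) ≤ v).card = v + 1 := by
  have h : (Finset.univ.filter fun r : Fin n => (r : ℕ) ≤ v)
      = Finset.Iic (⟨v, hv⟩ : Fin n) := by
    ext r; simp [Fin.le_def]
  rw [h, Fin.card_Iic]

/-- Main forward induction: under the constraints `CC`, the set of seen values at each
time `t ≤ T g K` is exactly the prefix of records. -/
lemma dSet_of_B {K : ℕ} (f : Fin (K + 1) ↪ Fin m) (g : ℕ → ℕ) (x : ℕ → Fin m)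
    (hB : ∀ t ≤ T g K, x t ∈ CC f g t) :
    ∀ t ≤ T g K, dSet x (t + 1)
      = (Finset.univ.filter fun r : Fin (K + 1) => (r : ℕ) ≤ jdx K g t).image f := by
  intro t
  induction t with
  | zero =>
    intro _
    have h0 : x 0 ∈ CC f g 0 := hB 0 (Nat.zero_le _)
    rw [CC_eq f g (0 : Fin (K + 1)) (by simp [T_zero]), mem_singleton] at h0
    have hj : jdx K g 0 = 0 := jdx_eq (Nat.zero_le _) (T_zero g)
    have hfil : (Finset.univ.filter fun r : Fin (K + 1) => (r : ℕ) ≤ jdx K g 0)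
        = {(0 : Fin (K + 1))} := by
      ext r
      simp only [hj, mem_filter, mem_univ, true_and, mem_singleton, Nat.le_zero,
        Fin.ext_iff, Fin.val_zero]
    simp only [zero_add]
    rw [hfil, image_singleton, dSet_one, h0]
  | succ t ih =>
    intro ht1
    have ht : t ≤ T g K := by omega
    have iht := ih ht
    rw [dSet_succ]
    by_cases hex : ∃ j : Fin (K + 1), T g (j : ℕ) = t + 1
    · obtain ⟨j, hj⟩ := hex
      have hxt : x (t + 1) = f j := by
        have h := hB (t + 1) ht1
        rwa [CC_eq f g j hj, mem_singleton] at h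
      have hj0 : 1 ≤ (j : ℕ) := by
        rcases Nat.eq_zero_or_pos (j : ℕ) with h | h
        · rw [h, T_zero] at hj; omega
        · omega
      have hjK : (j : ℕ) ≤ K := Nat.lt_succ_iff.mp j.isLt
      have hjdx1 : jdx K g (t + 1) = (j : ℕ) := jdx_eq hjK hj
      have hjdx0 : jdx K g t = (j : ℕ) - 1 := by
        refine le_antisymm ?_ ?_
        · by_contra h
          push_neg at h
          have h4 : (j : ℕ) ≤ jdx K g t := by omega
          have h5 : T g (j : ℕ) ≤ T g (jdx K g t) := (T_strictMono g).monotone h4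
          have h6 := (jdx_spec K g t).2
          omega
        · refine le_jdx (by omega) ?_
          have h7 : T g ((j : ℕ) - 1) < T g (j : ℕ) := T_strictMono g (by omega)
          omega
      rw [hjdx1, hxt, iht, hjdx0]
      have hfil : (Finset.univ.filter fun r : Fin (K + 1) => (r : ℕ) ≤ (j : ℕ))
          = insert j (Finset.univ.filter fun r : Fin (K + 1) => (r : ℕ) ≤ (j : ℕ) - 1) := by
        ext r
        simp only [mem_filter, mem_univ, true_and, mem_insert, Fin.ext_iff]
        omega
      rw [hfil, image_insert]
    · have hxt := hB (t + 1) ht1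
      rw [CC_ne f g hex, filter_T_lt g hex] at hxt
      have hjj : jdx K g (t + 1) = jdx K g t := by
        have h1 : jdx K g t ≤ jdx K g (t + 1) :=
          le_jdx (jdx_spec K g t).1 (le_trans (jdx_spec K g t).2 (Nat.le_succ t))
        have h2 : T g (jdx K g (t + 1)) ≠ t + 1 := fun hc =>
          hex ⟨⟨jdx K g (t + 1), Nat.lt_succ_of_le (jdx_spec K g (t + 1)).1⟩, hc⟩
        have h3 := (jdx_spec K g (t + 1)).2
        have h4 : jdx K g (t + 1) ≤ jdx K g t :=
          le_jdx (jdx_spec K g (t + 1)).1 (by omega)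
        omega
      rw [hjj] at hxt ⊢
      rw [iht, Finset.insert_eq_self.mpr hxt]

lemma cnt_of_B {K : ℕ} (f : Fin (K + 1) ↪ Fin m) (g : ℕ → ℕ) (x : ℕ → Fin m)
    (hB : ∀ t ≤ T g K, x t ∈ CC f g t) :
    ∀ t ≤ T g K, cnt x (t + 1) = jdx K g t + 1 := by
  intro t ht
  rw [cnt, dSet_of_B f g x hB t ht, Finset.card_image_of_injective _ f.injective,
    card_filter_le_val (Nat.lt_succ_of_le (jdx_spec K g t).1)]

lemma N_of_B {K : ℕ} (f : Fin (K + 1) ↪ Fin m) (g : ℕ → ℕ) (x : ℕ → Fin m)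
    (hB : ∀ t ≤ T g K, x t ∈ CC f g t) :
    ∀ j ≤ K, N x (j + 1) = T g j := by
  intro j hj
  have hmem : T g j ∈ {n | j + 1 ≤ cnt x (n + 1)} := by
    have h1 : cnt x (T g j + 1) = jdx K g (T g j) + 1 :=
      cnt_of_B f g x hB (T g j) ((T_strictMono g).monotone hj)
    have h2 : jdx K g (T g j) = j := jdx_eq hj rfl
    simp only [Set.mem_setOf_eq]
    omega
  refine le_antisymm (Nat.sInf_le hmem) (le_csInf ⟨_, hmem⟩ ?_)
  intro n hn
  by_contra h
  push_neg at h
  have hj1 : 1 ≤ j := by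
    rcases Nat.eq_zero_or_pos j with h0 | h0
    · rw [h0, T_zero] at h; omega
    · omega
  have hn' : n ≤ T g K := le_trans h.le ((T_strictMono g).monotone hj)
  have h1 : cnt x (n + 1) = jdx K g n + 1 := cnt_of_B f g x hB n hn'
  have h2 : jdx K g n ≤ j - 1 := by
    by_contra h2
    push_neg at h2
    have h3 : T g j ≤ T g (jdx K g n) := (T_strictMono g).monotone (by omega)
    have h4 := (jdx_spec K g n).2
    omega
  simp only [Set.mem_setOf_eq] at hn
  omega

lemma fwd {K : ℕ} (f : Fin (K + 1) ↪ Fin m) (g : ℕ → ℕ) (x : ℕ → Fin m)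
    (hB : ∀ t ≤ T g K, x t ∈ CC f g t) :
    ∀ j : Fin (K + 1), x (N x ((j : ℕ) + 1)) = f j := by
  intro j
  have hjK : (j : ℕ) ≤ K := Nat.lt_succ_iff.mp j.isLt
  rw [N_of_B f g x hB (j : ℕ) hjK]
  have h := hB (T g (j : ℕ)) ((T_strictMono g).monotone hjK)
  rwa [CC_eq f g j rfl, mem_singleton] at h

/-- Backward direction: if the records of `x` are `f 0, …, f K` in order, then `x`
satisfies the constraints `CC` for some gap pattern. -/
lemma bwd {K : ℕ} (f : Fin (K + 1) ↪ Fin m) (x : ℕ → Fin m)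
    (hA : ∀ j : Fin (K + 1), x (N x ((j : ℕ) + 1)) = f j) :
    ∃ g : ℕ → ℕ, ∀ t ≤ T g K, x t ∈ CC f g t := by
  have hA0 : x 0 = f 0 := by
    have := hA 0
    rwa [Fin.val_zero, zero_add, N_one] at this
  -- every record level up to K is attained
  have hne : ∀ j ≤ K, {n | j + 1 ≤ cnt x (n + 1)}.Nonempty := by
    intro j hj
    by_contra h
    rw [Set.not_nonempty_iff_eq_empty] at h
    have hj1 : 1 ≤ j := by
      rcases Nat.eq_zero_or_pos j with h0 | h0
      · exfalso
        have h1 : (0 : ℕ) ∈ {n | j + 1 ≤ cnt x (n + 1)} := by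
          simp [Set.mem_setOf_eq, cnt_one, h0]
        rw [h] at h1
        exact h1
      · omega
    have hNj : N x (j + 1) = 0 := by rw [N, h, Nat.sInf_empty]
    have h2 := hA ⟨j, by omega⟩
    rw [hNj] at h2
    have h3 : f (0 : Fin (K + 1)) = f ⟨j, by omega⟩ := hA0 ▸ h2
    have h4 := f.injective h3
    rw [Fin.ext_iff] at h4
    simp only [Fin.val_zero] at h4
    omega
  have hmemN : ∀ j ≤ K, j + 1 ≤ cnt x (N x (j + 1) + 1) := fun j hj =>
    Nat.sInf_mem (hne j hj)
  have hminN : ∀ j n, n < N x (j + 1) → cnt x (n + 1) ≤ j := by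
    intro j n hn
    have := Nat.notMem_of_lt_sInf hn
    simp only [Set.mem_setOf_eq, not_le] at this
    omega
  have hcnt : ∀ j ≤ K, cnt x (N x (j + 1) + 1) = j + 1 := by
    intro j hj
    refine le_antisymm ?_ (hmemN j hj)
    rcases Nat.eq_zero_or_pos (N x (j + 1)) with h0 | h0
    · rw [h0, zero_add, cnt_one]
      have := hmemN j hj
      rw [h0, zero_add, cnt_one] at this
      omega
    · have h1 : cnt x (N x (j + 1) - 1 + 1) ≤ j := hminN j _ (by omega)
      have h2 := cnt_succ_le x (N x (j + 1))
      have h3 : N x (j + 1) - 1 + 1 = N x (j + 1) := by omega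
      rw [h3] at h1
      omega
  have hmono : ∀ j, j + 1 ≤ K → N x (j + 1) < N x (j + 2) := by
    intro j hj
    by_contra h
    push_neg at h
    have h1 : cnt x (N x (j + 2) + 1) ≤ cnt x (N x (j + 1) + 1) :=
      cnt_mono x (by omega)
    have h2 := hcnt j (by omega)
    have h3 : cnt x (N x (j + 2) + 1) = j + 2 := hcnt (j + 1) hj
    omega
  -- the set of seen values at each record time
  have hDN : ∀ j ≤ K, dSet x (N x (j + 1) + 1)
      = (Finset.univ.filter fun r : Fin (K + 1) => (r : ℕ) ≤ j).image f := by
    intro j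
    induction j with
    | zero =>
      intro _
      simp only [zero_add]
      rw [N_one, zero_add, dSet_one, hA0]
      have hfil : (Finset.univ.filter fun r : Fin (K + 1) => (r : ℕ) ≤ 0)
          = {(0 : Fin (K + 1))} := by
        ext r
        simp only [mem_filter, mem_univ, true_and, mem_singleton, Nat.le_zero,
          Fin.ext_iff, Fin.val_zero]
      rw [hfil, image_singleton]
    | succ j ihj =>
      intro hj
      have hj' : j ≤ K := by omega
      have hab : N x (j + 1) < N x (j + 2) := hmono j hj
      have hb1 : 1 ≤ N x (j + 2) := by omega
      have hDb : dSet x (N x (j + 2)) = dSet x (N x (j + 1) + 1) := by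
        refine (Finset.eq_of_subset_of_card_le (dSet_mono x (by omega)) ?_).symm
        have h1 : cnt x (N x (j + 2) - 1 + 1) ≤ j + 1 := hminN (j + 1) _ (by
          have hE : N x (j + 1 + 1) = N x (j + 2) := rfl
          omega)
        have h2 : N x (j + 2) - 1 + 1 = N x (j + 2) := by omega
        rw [h2] at h1
        have h3 := hcnt j hj'
        show cnt x (N x (j + 2)) ≤ cnt x (N x (j + 1) + 1)
        have h4 : cnt x (N x (j + 2)) ≤ cnt x (N x (j + 2) - 1 + 1) :=
          cnt_mono x (by omega)
        omega
      have hxb : x (N x (j + 2)) = f ⟨j + 1, by omega⟩ := by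
        have := hA ⟨j + 1, by omega⟩
        exact this
      rw [show N x (j + 1 + 1) = N x (j + 2) from rfl, dSet_succ, hxb, hDb, ihj hj']
      have hfil : (Finset.univ.filter fun r : Fin (K + 1) => (r : ℕ) ≤ j + 1)
          = insert (⟨j + 1, by omega⟩ : Fin (K + 1))
              (Finset.univ.filter fun r : Fin (K + 1) => (r : ℕ) ≤ j) := by
        ext r
        simp only [mem_filter, mem_univ, true_and, mem_insert, Fin.ext_iff]
        omega
      rw [hfil, image_insert]
  -- values strictly between two record times lie among the seen values
  have hbetween : ∀ j, j + 1 ≤ K → ∀ t, N x (j + 1) < t → t < N x (j + 2) →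
      x t ∈ (Finset.univ.filter fun r : Fin (K + 1) => (r : ℕ) ≤ j).image f := by
    intro j hj t h1 h2
    have hc1 : cnt x (t + 1) ≤ j + 1 := hminN (j + 1) t h2
    have hc2 : j + 1 ≤ cnt x (t + 1) := by
      have h4 : cnt x (N x (j + 1) + 1) ≤ cnt x (t + 1) := cnt_mono x (by omega)
      have h3 := hcnt j (by omega)
      omega
    have hDt : dSet x (t + 1) = dSet x (N x (j + 1) + 1) := by
      refine (Finset.eq_of_subset_of_card_le (dSet_mono x (by omega)) ?_).symm
      have h3 := hcnt j (by omega)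
      show cnt x (t + 1) ≤ cnt x (N x (j + 1) + 1)
      omega
    have hxmem : x t ∈ dSet x (t + 1) := mem_dSet.mpr ⟨t, Nat.lt_succ_self t, rfl⟩
    rw [hDt, hDN j (by omega)] at hxmem
    exact hxmem
  -- define the gaps
  refine ⟨fun j => N x (j + 2) - N x (j + 1) - 1, ?_⟩
  set g : ℕ → ℕ := fun j => N x (j + 2) - N x (j + 1) - 1 with hg
  have hT : ∀ j ≤ K, T g j = N x (j + 1) := by
    intro j
    induction j with
    | zero =>
      intro _
      simp only [zero_add]
      rw [T_zero, N_one]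
    | succ j ihj =>
      intro hj
      rw [T_succ, ihj (by omega)]
      have := hmono j hj
      have hE : N x (j + 1 + 1) = N x (j + 2) := rfl
      simp only [hg]
      omega
  intro t ht
  by_cases hex : ∃ j : Fin (K + 1), T g (j : ℕ) = t
  · obtain ⟨j, hj⟩ := hex
    rw [CC_eq f g j hj, mem_singleton]
    have hjK : (j : ℕ) ≤ K := Nat.lt_succ_iff.mp j.isLt
    rw [← hj, hT (j : ℕ) hjK]
    exact hA j
  · rw [CC_ne f g hex, filter_T_lt g hex]
    set a := jdx K g t with ha
    have haK : a ≤ K := (jdx_spec K g t).1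
    have hat : T g a ≤ t := (jdx_spec K g t).2
    have hane : T g a ≠ t := fun hc => hex ⟨⟨a, by omega⟩, hc⟩
    have haK' : a < K := by
      rcases Nat.lt_or_ge a K with h | h
      · exact h
      · exfalso
        have haK2 : a = K := by omega
        rw [haK2] at hane hat
        omega
    have htlt : t < T g (a + 1) := by
      by_contra h
      push_neg at h
      have := le_jdx (show a + 1 ≤ K by omega) h
      omega
    have hTa : T g a = N x (a + 1) := hT a (by omega)
    have hTa1 : T g (a + 1) = N x (a + 2) := hT (a + 1) (by omega)
    exact hbetween a (by omega) t (by omega) (by omega)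


variable {m : ℕ}

/-! ### tsum over finite products -/

lemma tsum_pi_fin : ∀ {n : ℕ} (F : Fin n → ℕ → ℝ≥0∞),
    ∑' g : Fin n → ℕ, ∏ j, F j (g j) = ∏ j, ∑' u, F j u := by
  intro n
  induction n with
  | zero =>
    intro F
    rw [Fin.prod_univ_zero]
    have h1 : ∀ g : Fin 0 → ℕ, (∏ j, F j (g j)) = 1 := fun g => Fin.prod_univ_zero _
    rw [tsum_congr h1]
    exact tsum_eq_single (fun _ => 0) (fun b hb => absurd (Subsingleton.elim b _) hb) |>.trans rfl
  | succ n ih =>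
    intro F
    rw [← Equiv.tsum_eq (Fin.consEquiv fun _ : Fin (n + 1) => ℕ)
      (fun g => ∏ j, F j (g j))]
    rw [ENNReal.tsum_prod']
    have h1 : ∀ (u : ℕ) (g : Fin n → ℕ),
        (∏ j, F j ((Fin.consEquiv fun _ : Fin (n + 1) => ℕ) (u, g) j))
          = F 0 u * ∏ j : Fin n, F j.succ (g j) := by
      intro u g
      rw [Fin.prod_univ_succ]
      simp [Fin.consEquiv]
    calc ∑' (u : ℕ) (g : Fin n → ℕ),
          (∏ j, F j ((Fin.consEquiv fun _ : Fin (n + 1) => ℕ) (u, g) j))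
        = ∑' u : ℕ, F 0 u * ∑' g : Fin n → ℕ, ∏ j : Fin n, F j.succ (g j) := by
          refine tsum_congr fun u => ?_
          rw [tsum_congr (h1 u), ENNReal.tsum_mul_left]
      _ = (∑' u : ℕ, F 0 u) * ∏ j : Fin n, ∑' u, F j.succ u := by
          rw [ENNReal.tsum_mul_right, ih]
      _ = ∏ j, ∑' u, F j u := by rw [Fin.prod_univ_succ]

/-! ### measure computations -/

variable {Ω : Type*} [MeasurableSpace Ω] {μ : Measure Ω}
  {p : Fin m → ℝ} {ξ : ℕ → Ω → Fin m}

lemma meas_mem (hmeas : ∀ n, Measurable (ξ n))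
    (hdist : ∀ n i, μ {ω | ξ n ω = i} = ENNReal.ofReal (p i))
    (t : ℕ) (s : Finset (Fin m)) :
    μ {ω | ξ t ω ∈ s} = ∑ i ∈ s, ENNReal.ofReal (p i) := by
  have h1 : {ω | ξ t ω ∈ s} = ⋃ i ∈ s, {ω | ξ t ω = i} := by
    ext ω; simp
  rw [h1, measure_biUnion_finset ?_ ?_]
  · exact Finset.sum_congr rfl fun i _ => hdist t i
  · intro i _ i' _ hii
    rw [Function.onFun, Set.disjoint_left]
    intro ω h1 h2
    exact hii (h1.symm.trans h2)
  · intro i _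
    exact (hmeas t) (measurableSet_singleton i)

lemma meas_B (hmeas : ∀ n, Measurable (ξ n))
    (hindep : iIndepFun ξ μ)
    {K : ℕ} (f : Fin (K + 1) ↪ Fin m) (g : ℕ → ℕ) :
    μ (⋂ t ∈ Finset.range (T g K + 1), {ω | ξ t ω ∈ CC f g t})
      = ∏ t ∈ Finset.range (T g K + 1), μ {ω | ξ t ω ∈ CC f g t} := by
  refine hindep.meas_biInter fun t _ => ?_
  exact ⟨↑(CC f g t), (CC f g t).measurableSet, rfl⟩

/-- total weight of a constraint set -/
noncomputable def W (p : Fin m → ℝ) (s : Finset (Fin m)) : ℝ≥0∞ :=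
  ∑ i ∈ s, ENNReal.ofReal (p i)

lemma image_filter_le_castSucc {K : ℕ} (f : Fin (K + 2) ↪ Fin m) {v : ℕ} (hv : v ≤ K) :
    (Finset.univ.filter fun r : Fin (K + 2) => (r : ℕ) ≤ v).image f
      = (Finset.univ.filter fun r : Fin (K + 1) => (r : ℕ) ≤ v).image
          (Fin.castSuccEmb.trans f) := by
  ext a
  simp only [mem_image, mem_filter, mem_univ, true_and, Function.Embedding.trans_apply]
  constructor
  · rintro ⟨r, hr, rfl⟩
    exact ⟨⟨(r : ℕ), by omega⟩, hr, rfl⟩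
  · rintro ⟨r, hr, rfl⟩
    exact ⟨Fin.castSuccEmb r, by simpa using hr, rfl⟩

lemma CC_castSucc {K : ℕ} (f : Fin (K + 2) ↪ Fin m) (g : ℕ → ℕ) {t : ℕ}
    (ht : t ≤ T g K) :
    CC f g t = CC (Fin.castSuccEmb.trans f) g t := by
  by_cases hex : ∃ j : Fin (K + 1), T g (j : ℕ) = t
  · obtain ⟨j, hj⟩ := hex
    have hj2 : T g ((j.castSucc : Fin (K + 2)) : ℕ) = t := hj
    rw [CC_eq (Fin.castSuccEmb.trans f) g j hj, CC_eq f g j.castSucc hj2]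
    rfl
  · have hex2 : ¬∃ j : Fin (K + 2), T g (j : ℕ) = t := by
      rintro ⟨j, hj⟩
      have hjK : (j : ℕ) ≤ K := by
        by_contra h
        push_neg at h
        have h1 : T g (K + 1) ≤ T g (j : ℕ) := (T_strictMono g).monotone (by omega)
        have h2 : T g K < T g (K + 1) := T_strictMono g (by omega)
        omega
      exact hex ⟨⟨(j : ℕ), by omega⟩, hj⟩
    rw [CC_ne f g hex2, CC_ne (Fin.castSuccEmb.trans f) g hex]
    ext a
    simp only [mem_image, mem_filter, mem_univ, true_and, Function.Embedding.trans_apply]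
    constructor
    · rintro ⟨r, hr, rfl⟩
      have hrK : (r : ℕ) ≤ K := by
        by_contra h
        push_neg at h
        have h1 : T g (K + 1) ≤ T g (r : ℕ) := (T_strictMono g).monotone (by omega)
        have h2 : T g K < T g (K + 1) := T_strictMono g (by omega)
        omega
      exact ⟨⟨(r : ℕ), by omega⟩, hr, rfl⟩
    · rintro ⟨r, hr, rfl⟩
      exact ⟨Fin.castSuccEmb r, by simpa using hr, rfl⟩

/-- Evaluation of the product of per-coordinate weights of a cylinder. -/
lemma prod_W : ∀ (K : ℕ) (f : Fin (K + 1) ↪ Fin m) (g : ℕ → ℕ),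
    ∏ t ∈ Finset.range (T g K + 1), W p (CC f g t)
      = (∏ j : Fin (K + 1), ENNReal.ofReal (p (f j)))
        * ∏ j : Fin K,
            (W p ((Finset.univ.filter fun r : Fin (K + 1) => (r : ℕ) ≤ (j : ℕ)).image f))
              ^ g (j : ℕ) := by
  intro K
  induction K with
  | zero =>
    intro f g
    rw [T_zero, Finset.prod_range_one, CC_eq f g 0 (by simp [T_zero]),
      Fin.prod_univ_one, Fin.prod_univ_zero, mul_one]
    rw [W, Finset.sum_singleton]
  | succ K ih =>
    intro f g
    have hsplit : T g (K + 1) + 1 = (T g K + 1) + (g K + 1) := by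
      rw [T_succ]; omega
    rw [hsplit, Finset.prod_range_add]
    have h1 : ∏ t ∈ Finset.range (T g K + 1), W p (CC f g t)
        = ∏ t ∈ Finset.range (T g K + 1), W p (CC (Fin.castSuccEmb.trans f) g t) := by
      refine Finset.prod_congr rfl fun t ht => ?_
      rw [CC_castSucc f g (Nat.lt_succ_iff.mp (Finset.mem_range.mp ht))]
    rw [h1, ih (Fin.castSuccEmb.trans f) g]
    have h2 : ∀ u < g K,
        CC f g (T g K + 1 + u)
          = (Finset.univ.filter fun r : Fin (K + 2) => (r : ℕ) ≤ K).image f := by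
      intro u hu
      have hgt : T g K < T g K + 1 + u := by omega
      have hlt : T g K + 1 + u < T g (K + 1) := by rw [T_succ]; omega
      have hex : ¬∃ j : Fin (K + 2), T g (j : ℕ) = T g K + 1 + u := by
        rintro ⟨j, hj⟩
        rcases Nat.lt_or_ge (j : ℕ) (K + 1) with h | h
        · have : T g (j : ℕ) ≤ T g K := (T_strictMono g).monotone (by omega)
          omega
        · have hjv : (j : ℕ) = K + 1 := by omega
          rw [hjv] at hj
          omega
      rw [CC_ne f g hex]
      congr 1
      ext r
      simp only [mem_filter, mem_univ, true_and]
      constructor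
      · intro hr
        by_contra h
        push_neg at h
        have h1' : T g (K + 1) ≤ T g (r : ℕ) := (T_strictMono g).monotone (by omega)
        omega
      · intro hr
        have : T g (r : ℕ) ≤ T g K := (T_strictMono g).monotone hr
        omega
    have h3 : ∏ u ∈ Finset.range (g K + 1), W p (CC f g (T g K + 1 + u))
        = (W p ((Finset.univ.filter fun r : Fin (K + 2) => (r : ℕ) ≤ K).image f)) ^ g K
          * ENNReal.ofReal (p (f (Fin.last (K + 1)))) := by
      rw [Finset.prod_range_succ]
      congr 1
      · rw [Finset.prod_congr rfl fun u hu => by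
          rw [h2 u (Finset.mem_range.mp hu)]]
        rw [Finset.prod_const, Finset.card_range]
      · have hT : T g ((Fin.last (K + 1) : Fin (K + 2)) : ℕ) = T g K + 1 + g K := by
          rw [Fin.val_last, T_succ]; omega
        rw [CC_eq f g (Fin.last (K + 1)) hT, W, Finset.sum_singleton]
    rw [h3]
    have h4 : ∏ j : Fin (K + 2), ENNReal.ofReal (p (f j))
        = (∏ j : Fin (K + 1), ENNReal.ofReal (p ((Fin.castSuccEmb.trans f) j)))
          * ENNReal.ofReal (p (f (Fin.last (K + 1)))) := by
      rw [Fin.prod_univ_castSucc]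
      rfl
    have h5 : ∏ j : Fin (K + 1),
        (W p ((Finset.univ.filter fun r : Fin (K + 2) => (r : ℕ) ≤ (j : ℕ)).image f))
          ^ g (j : ℕ)
        = (∏ j : Fin K,
            (W p ((Finset.univ.filter fun r : Fin (K + 1) => (r : ℕ) ≤ (j : ℕ)).image
              (Fin.castSuccEmb.trans f))) ^ g (j : ℕ))
          * (W p ((Finset.univ.filter fun r : Fin (K + 2) => (r : ℕ) ≤ K).image f)) ^ g K := by
      rw [Fin.prod_univ_castSucc]
      congr 1
      refine Finset.prod_congr rfl fun j _ => ?_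
      rw [Fin.coe_castSucc, image_filter_le_castSucc f (le_of_lt j.isLt)]
    rw [h4, h5]
    ring

end RJL

namespace RJL

variable {m : ℕ} {Ω : Type*} [MeasurableSpace Ω]

/-- Extension of a gap tuple to a function on `ℕ`. -/
def ext (K : ℕ) (g : Fin K → ℕ) : ℕ → ℕ := fun r => if h : r < K then g ⟨r, h⟩ else 0

lemma ext_lt {K : ℕ} (g : Fin K → ℕ) {r : ℕ} (hr : r < K) : ext K g r = g ⟨r, hr⟩ :=
  dif_pos hr

lemma recordType_eq (ξ : ℕ → Ω → Fin m) (j : ℕ) (ω : Ω) :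
    recordType ξ j ω = (fun t => ξ t ω) (N (fun t => ξ t ω) j) := rfl

/-- The event `{Z₁ = f 0, …, Z_{K+1} = f K}` decomposes as a union of cylinders. -/
lemma set_eq {K : ℕ} (f : Fin (K + 1) ↪ Fin m) (ξ : ℕ → Ω → Fin m) :
    (⋂ j : Fin (K + 1), {ω | recordType ξ ((j : ℕ) + 1) ω = f j})
      = ⋃ g : Fin K → ℕ,
          ⋂ t ∈ Finset.range (T (ext K g) K + 1), {ω | ξ t ω ∈ CC f (ext K g) t} := by
  ext ω
  simp only [Set.mem_iInter, Set.mem_iUnion, Set.mem_setOf_eq, Finset.mem_range,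
    Nat.lt_succ_iff]
  constructor
  · intro hA
    have hA' : ∀ j : Fin (K + 1),
        (fun t => ξ t ω) (N (fun t => ξ t ω) ((j : ℕ) + 1)) = f j := fun j => hA j
    obtain ⟨g, hB⟩ := bwd f (fun t => ξ t ω) hA'
    refine ⟨fun j => g (j : ℕ), ?_⟩
    have hgg : ∀ r < K, ext K (fun j : Fin K => g (j : ℕ)) r = g r := by
      intro r hr
      rw [ext_lt _ hr]
    have hT : T (ext K (fun j : Fin K => g (j : ℕ))) K = T g K := T_congr hgg K le_rfl
    intro t ht
    rw [CC_congr f hgg t, hT] at *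
    exact hB t ht
  · rintro ⟨g, hB⟩ j
    exact fwd f (ext K g) (fun t => ξ t ω) hB j

lemma B_disjoint {K : ℕ} (f : Fin (K + 1) ↪ Fin m) (ξ : ℕ → Ω → Fin m) :
    Pairwise (Function.onFun Disjoint fun g : Fin K → ℕ =>
      ⋂ t ∈ Finset.range (T (ext K g) K + 1), {ω | ξ t ω ∈ CC f (ext K g) t}) := by
  intro g g' hne
  rw [Function.onFun, Set.disjoint_left]
  intro ω hω hω'
  apply hne
  simp only [Set.mem_iInter, Set.mem_setOf_eq, Finset.mem_range, Nat.lt_succ_iff] at hω hω'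
  have h1 : ∀ j ≤ K, T (ext K g) j = N (fun t => ξ t ω) (j + 1) := fun j hj =>
    (N_of_B f (ext K g) (fun t => ξ t ω) hω j hj).symm
  have h2 : ∀ j ≤ K, T (ext K g') j = N (fun t => ξ t ω) (j + 1) := fun j hj =>
    (N_of_B f (ext K g') (fun t => ξ t ω) hω' j hj).symm
  funext j
  have e1 : T (ext K g) ((j : ℕ) + 1) = T (ext K g') ((j : ℕ) + 1) := by
    rw [h1 _ j.isLt, h2 _ j.isLt]
  have e0 : T (ext K g) (j : ℕ) = T (ext K g') (j : ℕ) := by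
    rw [h1 _ (le_of_lt j.isLt), h2 _ (le_of_lt j.isLt)]
  rw [T_succ, T_succ, ext_lt g j.isLt, ext_lt g' j.isLt] at e1
  have : g ⟨(j : ℕ), j.isLt⟩ = g' ⟨(j : ℕ), j.isLt⟩ := by omega
  simpa using this

lemma sum_lt_one {n : ℕ} {p : Fin m → ℝ} (hp0 : ∀ i, 0 < p i) (hp1 : ∑ i, p i = 1)
    (f : Fin n ↪ Fin m) (s : Finset (Fin n)) (j0 : Fin n) (hj0 : j0 ∉ s) :
    ∑ r ∈ s, p (f r) < 1 := by
  have h1 : ∑ r ∈ s, p (f r) < ∑ r : Fin n, p (f r) :=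
    Finset.sum_lt_sum_of_subset (Finset.subset_univ s) (Finset.mem_univ j0) hj0 (hp0 _)
      (fun r _ _ => (hp0 _).le)
  have h2 : ∑ r : Fin n, p (f r) ≤ 1 := by
    rw [← hp1, show (∑ r : Fin n, p (f r)) = ∑ i ∈ Finset.univ.image f, p i from
      (Finset.sum_image fun a _ b _ h => f.injective h).symm]
    exact Finset.sum_le_sum_of_subset_of_nonneg (Finset.subset_univ _)
      fun i _ _ => (hp0 i).le
  linarith

/-- Final real-to-ENNReal algebra. -/
lemma final_alg {K : ℕ} {p : Fin m → ℝ} (hp0 : ∀ i, 0 < p i) (hp1 : ∑ i, p i = 1)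
    (f : Fin (K + 1) ↪ Fin m) :
    (∏ j : Fin (K + 1), ENNReal.ofReal (p (f j)))
      * ∏ j : Fin K, (1 - ENNReal.ofReal
          (∑ r ∈ Finset.univ.filter (fun r : Fin (K + 1) => (r : ℕ) ≤ (j : ℕ)), p (f r)))⁻¹
    = ENNReal.ofReal (∏ t : Fin (K + 1),
        p (f t) / (1 - ∑ r ∈ Finset.univ.filter (· < t), p (f r))) := by
  have hSlt : ∀ t : Fin (K + 1), ∑ r ∈ Finset.univ.filter (· < t), p (f r) < 1 := fun t =>
    sum_lt_one hp0 hp1 f _ t (by simp)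
  have hS0 : ∀ t : Fin (K + 1), (0:ℝ) ≤ ∑ r ∈ Finset.univ.filter (· < t), p (f r) :=
    fun t => Finset.sum_nonneg fun r _ => (hp0 (f r)).le
  rw [ENNReal.ofReal_prod_of_nonneg fun t _ =>
    div_nonneg (hp0 (f t)).le (by linarith [hSlt t])]
  have hterm : ∀ t ∈ (Finset.univ : Finset (Fin (K + 1))),
      ENNReal.ofReal (p (f t) / (1 - ∑ r ∈ Finset.univ.filter (· < t), p (f r)))
        = ENNReal.ofReal (p (f t))
          * (1 - ENNReal.ofReal (∑ r ∈ Finset.univ.filter (· < t), p (f r)))⁻¹ := by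
    intro t _
    rw [ENNReal.ofReal_div_of_pos (by linarith [hSlt t]),
      ENNReal.ofReal_sub _ (hS0 t), ENNReal.ofReal_one, div_eq_mul_inv]
  rw [Finset.prod_congr rfl hterm, Finset.prod_mul_distrib]
  congr 1
  rw [Fin.prod_univ_succ]
  have h0 : (Finset.univ.filter (· < (0 : Fin (K + 1)))) = (∅ : Finset (Fin (K + 1))) := by
    ext r
    simp [Fin.lt_def]
  rw [h0]
  simp only [Finset.sum_empty, ENNReal.ofReal_zero, tsub_zero, inv_one, one_mul]
  refine (Finset.prod_congr rfl fun (j : Fin K) _ => ?_).symm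
  have hfil : (Finset.univ.filter (· < Fin.succ j))
      = Finset.univ.filter fun r : Fin (K + 1) => (r : ℕ) ≤ (j : ℕ) := by
    ext r
    simp only [Finset.mem_filter, Finset.mem_univ, true_and, Fin.lt_def, Fin.val_succ]
    omega
  rw [hfil]

/-- Core result: the joint law of the first `K+1` record types. -/
theorem core (μ : MeasureTheory.Measure Ω) {p : Fin m → ℝ}
    (hp0 : ∀ i, 0 < p i) (hp1 : ∑ i, p i = 1)
    (ξ : ℕ → Ω → Fin m) (hmeas : ∀ n, Measurable (ξ n))
    (hindep : ProbabilityTheory.iIndepFun ξ μ)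
    (hdist : ∀ n i, μ {ω | ξ n ω = i} = ENNReal.ofReal (p i))
    (K : ℕ) (f : Fin (K + 1) ↪ Fin m) :
    μ (⋂ j : Fin (K + 1), {ω | recordType ξ ((j : ℕ) + 1) ω = f j})
      = ENNReal.ofReal (∏ t : Fin (K + 1),
          p (f t) / (1 - ∑ r ∈ Finset.univ.filter (· < t), p (f r))) := by
  rw [set_eq f ξ]
  rw [measure_iUnion (B_disjoint f ξ) (fun g =>
    MeasurableSet.iInter fun t => MeasurableSet.iInter fun _ =>
      (hmeas t) (CC f (ext K g) t).measurableSet)]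
  have hstep : ∀ g : Fin K → ℕ,
      μ (⋂ t ∈ Finset.range (T (ext K g) K + 1), {ω | ξ t ω ∈ CC f (ext K g) t})
        = (∏ j : Fin (K + 1), ENNReal.ofReal (p (f j)))
          * ∏ j : Fin K,
              (W p ((Finset.univ.filter fun r : Fin (K + 1) => (r : ℕ) ≤ (j : ℕ)).image f))
                ^ g j := by
    intro g
    rw [meas_B hmeas hindep f (ext K g)]
    rw [show (∏ t ∈ Finset.range (T (ext K g) K + 1), μ {ω | ξ t ω ∈ CC f (ext K g) t})
        = ∏ t ∈ Finset.range (T (ext K g) K + 1), W p (CC f (ext K g) t) from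
      Finset.prod_congr rfl fun t _ => meas_mem hmeas hdist t _]
    rw [prod_W K f (ext K g)]
    congr 1
    refine Finset.prod_congr rfl fun j _ => ?_
    rw [ext_lt g j.isLt]
  rw [tsum_congr hstep]
  rw [ENNReal.tsum_mul_left]
  rw [tsum_pi_fin fun j u =>
    (W p ((Finset.univ.filter fun r : Fin (K + 1) => (r : ℕ) ≤ (j : ℕ)).image f)) ^ u]
  have hW : ∀ j : Fin K,
      W p ((Finset.univ.filter fun r : Fin (K + 1) => (r : ℕ) ≤ (j : ℕ)).image f)
        = ENNReal.ofReal
            (∑ r ∈ Finset.univ.filter (fun r : Fin (K + 1) => (r : ℕ) ≤ (j : ℕ)), p (f r)) := by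
    intro j
    rw [W, Finset.sum_image fun a _ b _ h => f.injective h,
      ENNReal.ofReal_sum_of_nonneg fun r _ => (hp0 (f r)).le]
  have hgeo : ∀ j ∈ (Finset.univ : Finset (Fin K)),
      (∑' u : ℕ,
        (W p ((Finset.univ.filter fun r : Fin (K + 1) => (r : ℕ) ≤ (j : ℕ)).image f)) ^ u)
        = (1 - ENNReal.ofReal
            (∑ r ∈ Finset.univ.filter (fun r : Fin (K + 1) => (r : ℕ) ≤ (j : ℕ)), p (f r)))⁻¹ := by
    intro j _
    rw [hW j, ENNReal.tsum_geometric]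
  rw [Finset.prod_congr rfl hgeo, final_alg hp0 hp1 f]

end RJL

/-- For 2 ≤ s ≤ m and pairwise distinct i₁,…,i_s (encoded by the embedding
f, with i_j = f (j-1)), P[Z_s = i_s | Z₁ = i₁,…,Z_{s−1} = i_{s−1}]
= p_{i_s} / (1 − p_{i₁} − ⋯ − p_{i_{s−1}}) — stated multiplicatively — and consequently
P[Z₁ = i₁, …, Z_s = i_s] = ∏_{j=1}^s p_{i_j} / p(i₁,…,i_{j−1}). -/
theorem record_types_joint_law
    {Ω : Type*} [MeasurableSpace Ω] (μ : Measure Ω) [IsProbabilityMeasure μ]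
    {m : ℕ} (p : Fin m → ℝ) (hp0 : ∀ i, 0 < p i) (hp1 : ∑ i, p i = 1)
    (ξ : ℕ → Ω → Fin m) (hmeas : ∀ n, Measurable (ξ n))
    (hindep : iIndepFun ξ μ)
    (hdist : ∀ n i, μ {ω | ξ n ω = i} = ENNReal.ofReal (p i))
    (s : ℕ) (hs : 2 ≤ s) (hsm : s ≤ m) (f : Fin s ↪ Fin m) :
    (μ (⋂ t : Fin s, {ω | recordType ξ ((t : ℕ) + 1) ω = f t})
        = ENNReal.ofReal
            (p (f ⟨s - 1, by omega⟩)
              / (1 - ∑ t ∈ Finset.univ.filter (fun t : Fin s => (t : ℕ) < s - 1), p (f t)))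
          * μ (⋂ t : Fin s, ⋂ (_ : (t : ℕ) < s - 1),
                {ω | recordType ξ ((t : ℕ) + 1) ω = f t})) ∧
    μ (⋂ t : Fin s, {ω | recordType ξ ((t : ℕ) + 1) ω = f t})
      = ENNReal.ofReal
          (∏ t : Fin s, p (f t) / (1 - ∑ r ∈ Finset.univ.filter (· < t), p (f r))) := by
  obtain ⟨K, rfl⟩ : ∃ K, s = K + 2 := ⟨s - 2, by omega⟩
  have h2 : μ (⋂ t : Fin (K + 2), {ω | recordType ξ ((t : ℕ) + 1) ω = f t})
      = ENNReal.ofReal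
          (∏ t : Fin (K + 2), p (f t) / (1 - ∑ r ∈ Finset.univ.filter (· < t), p (f r))) :=
    RJL.core μ hp0 hp1 ξ hmeas hindep hdist (K + 1) f
  refine ⟨?_, h2⟩
  set f' : Fin (K + 1) ↪ Fin m := Fin.castSuccEmb.trans f with hf'
  have hA1 : (⋂ t : Fin (K + 2), ⋂ (_ : (t : ℕ) < K + 2 - 1),
        {ω | recordType ξ ((t : ℕ) + 1) ω = f t})
      = ⋂ t : Fin (K + 1), {ω | recordType ξ ((t : ℕ) + 1) ω = f' t} := by
    ext ω
    simp only [Set.mem_iInter, Set.mem_setOf_eq]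
    constructor
    · intro h t
      have ht : ((t.castSucc : Fin (K + 2)) : ℕ) < K + 2 - 1 := by
        rw [Fin.coe_castSucc]; omega
      have := h t.castSucc ht
      rw [Fin.coe_castSucc] at this
      exact this
    · intro h t ht
      have h3 := h ⟨(t : ℕ), by omega⟩
      have he : (⟨(t : ℕ), by omega⟩ : Fin (K + 1)).castSucc = t := Fin.ext rfl
      rw [hf', Function.Embedding.trans_apply] at h3
      rw [show Fin.castSuccEmb (⟨(t : ℕ), by omega⟩ : Fin (K + 1)) = t from he] at h3
      exact h3
  have h1 : μ (⋂ t : Fin (K + 1), {ω | recordType ξ ((t : ℕ) + 1) ω = f' t})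
      = ENNReal.ofReal
          (∏ t : Fin (K + 1), p (f' t) / (1 - ∑ r ∈ Finset.univ.filter (· < t), p (f' r))) :=
    RJL.core μ hp0 hp1 ξ hmeas hindep hdist K f'
  rw [hA1, h1, h2]
  have hratio_nonneg :
      (0:ℝ) ≤ p (f ⟨K + 2 - 1, by omega⟩)
        / (1 - ∑ t ∈ Finset.univ.filter (fun t : Fin (K + 2) => (t : ℕ) < K + 2 - 1), p (f t)) := by
    have hlt : ∑ t ∈ Finset.univ.filter (fun t : Fin (K + 2) => (t : ℕ) < K + 2 - 1), p (f t) < 1 :=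
      RJL.sum_lt_one hp0 hp1 f _ (Fin.last (K + 1)) (by simp [Fin.val_last])
    exact div_nonneg (hp0 _).le (by linarith)
  rw [← ENNReal.ofReal_mul hratio_nonneg]
  congr 1
  rw [Fin.prod_univ_castSucc]
  have hlast : p (f (Fin.last (K + 1)))
      / (1 - ∑ r ∈ Finset.univ.filter (· < Fin.last (K + 1)), p (f r))
      = p (f ⟨K + 2 - 1, by omega⟩)
        / (1 - ∑ t ∈ Finset.univ.filter (fun t : Fin (K + 2) => (t : ℕ) < K + 2 - 1), p (f t)) := by
    have e1 : Fin.last (K + 1) = (⟨K + 2 - 1, by omega⟩ : Fin (K + 2)) := Fin.ext rfl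
    have e2 : (Finset.univ.filter (· < Fin.last (K + 1)))
        = Finset.univ.filter fun t : Fin (K + 2) => (t : ℕ) < K + 2 - 1 := by
      ext r
      simp only [Finset.mem_filter, Finset.mem_univ, true_and, Fin.lt_def, Fin.val_last]
      omega
    rw [e2, ← e1]
  have hcast : ∀ t : Fin (K + 1),
      p (f t.castSucc) / (1 - ∑ r ∈ Finset.univ.filter (· < t.castSucc), p (f r))
        = p (f' t) / (1 - ∑ r ∈ Finset.univ.filter (· < t), p (f' r)) := by
    intro t
    have e3 : (Finset.univ.filter (· < t.castSucc))
        = (Finset.univ.filter (· < t)).map Fin.castSuccEmb := by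
      ext r
      simp only [Finset.mem_map, Finset.mem_filter, Finset.mem_univ, true_and]
      constructor
      · intro hr
        have hrK : (r : ℕ) < K + 1 := by
          have := Fin.lt_def.mp hr
          rw [Fin.coe_castSucc] at this
          omega
        refine ⟨⟨(r : ℕ), hrK⟩, ?_, Fin.ext rfl⟩
        rw [Fin.lt_def] at hr ⊢
        rw [Fin.coe_castSucc] at hr
        exact hr
      · rintro ⟨r', hr', rfl⟩
        rw [Fin.lt_def] at hr' ⊢
        simpa using hr'
    rw [e3, Finset.sum_map]
    rfl
  rw [hlast, Finset.prod_congr rfl fun t _ => hcast t]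
  ring
end

section
/- Let p = (p_1,…,p_m) be a probability vector with all p_i > 0 and Σ p_i = 1. Then the inclusion–exclusion expression Σ_i 1/p_i − Σ_{i<j} 1/(p_i+p_j) + Σ_{i<j<k} 1/(p_i+p_j+p_k) − ⋯ + (−1)^{m+1}/(p_1+⋯+p_m) equals the nested-sum expression 1 + Σ_{i₁} p_{i₁}/p(i₁) + Σ_{i₁≠i₂} p_{i₁}p_{i₂}/(p(i₁)p(i₁,i₂)) + ⋯ + Σ_{i₁,…,i_{m−1} pairwise distinct} p_{i₁}⋯p_{i_{m−1}}/(p(i₁)⋯p(i₁,…,i_{m−1})), where p(i₁,…,i_s) = 1 − p_{i₁} − ⋯ − p_{i_s} (both expressions equal the expected waiting time to observe all m values). -/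
open MeasureTheory ProbabilityTheory Finset
open scoped ENNReal

open Finset

section Aux

variable {m : ℕ}

/-- IE sum over nonempty subsets of `T`. -/
noncomputable def ieL (p : Fin m → ℝ) (T : Finset (Fin m)) : ℝ :=
  ∑ A ∈ T.powerset.filter (fun A : Finset (Fin m) => A.Nonempty),
    (-1 : ℝ) ^ (A.card + 1) * (∑ i ∈ A, p i)⁻¹

noncomputable def gTerm (p : Fin m → ℝ) (c : ℝ) (s : ℕ) (f : Fin s → Fin m) : ℝ :=
  (∏ t, p (f t)) / ∏ t : Fin s, (c - ∑ r ∈ Finset.univ.filter (· ≤ t), p (f r))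

noncomputable def Inj (s : ℕ) (T : Finset (Fin m)) : Finset (Fin s → Fin m) :=
  Finset.univ.filter (fun f => Function.Injective f ∧ ∀ t, f t ∈ T)

noncomputable def GS (p : Fin m → ℝ) (c : ℝ) (T : Finset (Fin m)) (s : ℕ) : ℝ :=
  ∑ f ∈ Inj s T, gTerm p c s f

noncomputable def Etot (p : Fin m → ℝ) (c : ℝ) (T : Finset (Fin m)) : ℝ :=
  ∑ s ∈ Finset.range (T.card + 1), GS p c T s

lemma comb1 {T : Finset (Fin m)} (hT : T.Nonempty) :
    ∑ A ∈ T.powerset.filter (fun A : Finset (Fin m) => A.Nonempty), (-1 : ℝ) ^ (A.card + 1) = 1 := by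
  have h : (∑ A ∈ T.powerset, (-1 : ℤ) ^ A.card) = 0 :=
    Finset.sum_powerset_neg_one_pow_card_of_nonempty hT
  have h2 : T.powerset.filter (fun A : Finset (Fin m) => A.Nonempty) = T.powerset.erase ∅ := by
    ext A
    simp [Finset.nonempty_iff_ne_empty, and_comm]
  rw [h2]
  have h3 : (∑ A ∈ T.powerset.erase ∅, (-1 : ℤ) ^ A.card) = -1 := by
    have h5 := Finset.add_sum_erase T.powerset (fun A : Finset (Fin m) => (-1 : ℤ) ^ A.card)
      (Finset.empty_mem_powerset T)
    rw [h] at h5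
    simp only [Finset.card_empty, pow_zero] at h5
    linarith
  calc ∑ A ∈ T.powerset.erase ∅, (-1 : ℝ) ^ (A.card + 1)
      = -(((∑ A ∈ T.powerset.erase ∅, (-1 : ℤ) ^ A.card : ℤ)) : ℝ) := by
        push_cast
        rw [← Finset.sum_neg_distrib]
        exact Finset.sum_congr rfl fun A _ => by ring
    _ = 1 := by rw [h3]; norm_num

lemma key_rec (p : Fin m → ℝ) (hp0 : ∀ i, 0 < p i) {T : Finset (Fin m)} (hT : T.Nonempty) :
    (∑ j ∈ T, p j) * ieL p T = 1 + ∑ i ∈ T, p i * ieL p (T.erase i) := by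
  have hsw : ∑ i ∈ T, p i * ieL p (T.erase i)
      = ∑ B ∈ T.powerset.filter (fun A : Finset (Fin m) => A.Nonempty),
          ∑ i ∈ T \ B, p i * ((-1 : ℝ) ^ (B.card + 1) * (∑ j ∈ B, p j)⁻¹) := by
    simp only [ieL, Finset.mul_sum]
    rw [Finset.sum_comm']
    intro i B
    simp only [Finset.mem_filter, Finset.mem_powerset, Finset.mem_sdiff, Finset.subset_erase]
    tauto
  have hterm : ∀ B ∈ T.powerset.filter (fun A : Finset (Fin m) => A.Nonempty),
      ∑ i ∈ T \ B, p i * ((-1 : ℝ) ^ (B.card + 1) * (∑ j ∈ B, p j)⁻¹)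
      = (∑ j ∈ T, p j) * ((-1 : ℝ) ^ (B.card + 1) * (∑ j ∈ B, p j)⁻¹)
        - (-1 : ℝ) ^ (B.card + 1) := by
    intro B hB
    rw [Finset.mem_filter, Finset.mem_powerset] at hB
    have hBpos : 0 < ∑ j ∈ B, p j := Finset.sum_pos (fun j _ => hp0 j) hB.2
    rw [← Finset.sum_mul, Finset.sum_sdiff_eq_sub hB.1]
    field_simp
  rw [hsw, Finset.sum_congr rfl hterm, Finset.sum_sub_distrib, comb1 hT, ← Finset.mul_sum]
  have hL : ieL p T = ∑ A ∈ T.powerset.filter (fun A : Finset (Fin m) => A.Nonempty),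
      (-1 : ℝ) ^ (A.card + 1) * (∑ i ∈ A, p i)⁻¹ := rfl
  rw [← hL]
  ring

lemma gTerm_zero (p : Fin m → ℝ) (c : ℝ) (f : Fin 0 → Fin m) : gTerm p c 0 f = 1 := by
  simp [gTerm]

lemma filter_sum_succ {s : ℕ} (h : Fin (s + 1) → ℝ) (t : Fin s) :
    ∑ r ∈ Finset.univ.filter (· ≤ t.succ), h r
      = h 0 + ∑ r ∈ Finset.univ.filter (· ≤ t), h r.succ := by
  rw [Finset.sum_filter, Finset.sum_filter, Fin.sum_univ_succ]
  simp [Fin.succ_le_succ_iff, Fin.zero_le]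

lemma gTerm_succ (p : Fin m → ℝ) (c : ℝ) {s : ℕ} (f : Fin (s + 1) → Fin m) :
    gTerm p c (s + 1) f
      = p (f 0) / (c - p (f 0)) * gTerm p (c - p (f 0)) s (f ∘ Fin.succ) := by
  unfold gTerm
  rw [Fin.prod_univ_succ,
    Fin.prod_univ_succ (fun t => c - ∑ r ∈ Finset.univ.filter (· ≤ t), p (f r)),
    div_mul_div_comm]
  congr 2
  · congr 1
    have : (Finset.univ.filter (· ≤ (0 : Fin (s + 1)))) = {0} := by
      ext r
      simp [Fin.le_zero_iff]
    rw [this, Finset.sum_singleton]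
  · refine Finset.prod_congr rfl fun t _ => ?_
    rw [filter_sum_succ (fun r => p (f r)) t]
    ring_nf
    rfl

lemma GS_zero (p : Fin m → ℝ) (c : ℝ) (T : Finset (Fin m)) : GS p c T 0 = 1 := by
  unfold GS
  have h1 : Inj (m := m) 0 T = Finset.univ := by
    ext f
    simp only [Inj, Finset.mem_filter, Finset.mem_univ, true_and, iff_true]
    exact ⟨fun a b => absurd a.2 (by omega), fun t => absurd t.2 (by omega)⟩
  rw [h1]
  have h2 : ∀ f : Fin 0 → Fin m, gTerm p c 0 f = 1 := gTerm_zero p c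
  rw [Finset.sum_congr rfl fun f _ => h2 f, Finset.sum_const]
  simp [Finset.card_univ]

lemma GS_succ (p : Fin m → ℝ) (c : ℝ) (T : Finset (Fin m)) (s : ℕ) :
    GS p c T (s + 1)
      = ∑ i ∈ T, p i / (c - p i) * GS p (c - p i) (T.erase i) s := by
  calc GS p c T (s + 1)
      = ∑ f ∈ Inj (s + 1) T, p (f 0) / (c - p (f 0)) * gTerm p (c - p (f 0)) s (f ∘ Fin.succ) :=
        Finset.sum_congr rfl fun f _ => gTerm_succ p c f
    _ = ∑ x ∈ T.sigma (fun i => Inj s (T.erase i)),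
          p x.1 / (c - p x.1) * gTerm p (c - p x.1) s x.2 := by
        refine Finset.sum_nbij'
          (fun f => (⟨f 0, f ∘ Fin.succ⟩ : Σ _ : Fin m, (Fin s → Fin m)))
          (fun x => Fin.cons x.1 x.2) ?_ ?_ ?_ ?_ ?_
        · intro f hf
          simp only [Inj, Finset.mem_filter, Finset.mem_univ, true_and] at hf
          simp only [Finset.mem_sigma, Inj, Finset.mem_filter, Finset.mem_univ, true_and]
          refine ⟨hf.2 0, hf.1.comp (Fin.succ_injective _), fun t => ?_⟩
          exact Finset.mem_erase.mpr ⟨fun h => Fin.succ_ne_zero t (hf.1 h), hf.2 _⟩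
        · rintro ⟨i, g⟩ hx
          simp only [Finset.mem_sigma, Inj, Finset.mem_filter, Finset.mem_univ, true_and] at hx
          simp only [Inj, Finset.mem_filter, Finset.mem_univ, true_and]
          constructor
          · rw [Fin.cons_injective_iff]
            refine ⟨?_, hx.2.1⟩
            rintro ⟨t, ht⟩
            exact (Finset.mem_erase.mp (hx.2.2 t)).1 ht
          · intro t
            refine Fin.cases ?_ ?_ t
            · simpa using hx.1
            · intro t'
              simpa using (Finset.mem_erase.mp (hx.2.2 t')).2
        · intro f hf
          funext t
          refine Fin.cases ?_ ?_ t <;> simp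
        · rintro ⟨i, g⟩ hx
          refine Sigma.ext (by simp) (heq_of_eq ?_)
          funext t
          simp
        · intro f hf
          rfl
    _ = ∑ i ∈ T, ∑ g ∈ Inj s (T.erase i), p i / (c - p i) * gTerm p (c - p i) s g :=
        Finset.sum_sigma _ _ _
    _ = ∑ i ∈ T, p i / (c - p i) * GS p (c - p i) (T.erase i) s := by
        simp [GS, Finset.mul_sum]

lemma Etot_rec (p : Fin m → ℝ) (c : ℝ) (T : Finset (Fin m)) :
    Etot p c T = 1 + ∑ i ∈ T, p i / (c - p i) * Etot p (c - p i) (T.erase i) := by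
  unfold Etot
  rw [Finset.sum_range_succ']
  have h0 : GS p c T 0 = 1 := GS_zero p c T
  have h1 : ∀ s ∈ Finset.range T.card, GS p c T (s + 1)
      = ∑ i ∈ T, p i / (c - p i) * GS p (c - p i) (T.erase i) s := fun s _ => GS_succ p c T s
  rw [Finset.sum_congr rfl h1, h0, Finset.sum_comm, add_comm]
  congr 1
  refine Finset.sum_congr rfl fun i hi => ?_
  rw [← Finset.mul_sum]
  congr 1
  refine Finset.sum_congr ?_ fun s _ => rfl
  rw [Finset.card_erase_of_mem hi]
  have hc : 0 < T.card := Finset.card_pos.mpr ⟨i, hi⟩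
  congr 1
  omega



lemma ieL_empty (p : Fin m → ℝ) : ieL p (∅ : Finset (Fin m)) = 0 := by
  simp [ieL, Finset.filter_singleton, Finset.not_nonempty_empty]

lemma main_ind (p : Fin m → ℝ) (hp0 : ∀ i, 0 < p i) (T : Finset (Fin m)) :
    T.Nonempty → Etot p (∑ j ∈ T, p j) T = (∑ j ∈ T, p j) * ieL p T := by
  induction T using Finset.strongInduction with
  | _ T ih =>
    intro hT
    rw [Etot_rec, key_rec p hp0 hT]
    congr 1
    refine Finset.sum_congr rfl fun i hi => ?_
    have hw : (∑ j ∈ T, p j) - p i = ∑ j ∈ T.erase i, p j := by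
      rw [← Finset.add_sum_erase T p hi]; ring
    rw [hw]
    by_cases h : (T.erase i).Nonempty
    · have hpos : 0 < ∑ j ∈ T.erase i, p j := Finset.sum_pos (fun j _ => hp0 j) h
      rw [ih (T.erase i) (Finset.erase_ssubset hi) h]
      calc p i / (∑ j ∈ T.erase i, p j) * ((∑ j ∈ T.erase i, p j) * ieL p (T.erase i))
          = p i * ieL p (T.erase i)
            * ((∑ j ∈ T.erase i, p j) / (∑ j ∈ T.erase i, p j)) := by ring
        _ = p i * ieL p (T.erase i) := by rw [div_self hpos.ne', mul_one]
    · have he : T.erase i = ∅ := Finset.not_nonempty_iff_eq_empty.mp h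
      rw [he]
      simp [ieL_empty]

end Aux


lemma nestedSum_eq_GS {m : ℕ} (p : Fin m → ℝ) (s : ℕ) :
    nestedSum p s = ∑ f ∈ Inj s (Finset.univ : Finset (Fin m)), gTerm p 1 s f := by
  unfold nestedSum
  refine Finset.sum_bij (fun f _ => (f : Fin s → Fin m)) ?_ ?_ ?_ ?_
  · intro f _
    simp [Inj, f.injective]
  · intro f _ g _ hfg
    exact DFunLike.coe_injective hfg
  · intro g hg
    simp only [Inj, Finset.mem_filter, Finset.mem_univ, true_and] at hg
    exact ⟨⟨g, hg.1⟩, Finset.mem_univ _, rfl⟩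
  · intro f _
    rfl

theorem inclusion_exclusion_eq_nested_sum'
    {m : ℕ} (p : Fin m → ℝ) (hp0 : ∀ i, 0 < p i) (hp1 : ∑ i, p i = 1) :
    ∑ A ∈ Finset.univ.powerset.filter (fun A : Finset (Fin m) => A.Nonempty),
        (-1 : ℝ) ^ (A.card + 1) * (∑ i ∈ A, p i)⁻¹
      = ∑ s ∈ Finset.range m,
          ∑ f ∈ Inj s (Finset.univ : Finset (Fin m)), gTerm p 1 s f := by
  have hm : 0 < m := by
    rcases Nat.eq_zero_or_pos m with h | h
    · subst h
      simp at hp1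
    · exact h
  have huniv : (Finset.univ : Finset (Fin m)).Nonempty := ⟨⟨0, hm⟩, Finset.mem_univ _⟩
  have h1 : Etot p 1 Finset.univ = ieL p Finset.univ := by
    have := main_ind p hp0 Finset.univ huniv
    rw [hp1, one_mul] at this
    exact this
  have hcard : (Finset.univ : Finset (Fin m)).card = m := by simp
  have hGm : GS p 1 (Finset.univ : Finset (Fin m)) m = 0 := by
    refine Finset.sum_eq_zero fun f hf => ?_
    simp only [Inj, Finset.mem_filter, Finset.mem_univ, true_and] at hf
    have hbij : Function.Bijective f := Finite.injective_iff_bijective.mp hf.1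
    set t₀ : Fin m := ⟨m - 1, by omega⟩ with ht₀
    have hfil : Finset.univ.filter (· ≤ t₀) = Finset.univ := by
      refine Finset.filter_true_of_mem fun r _ => ?_
      rw [Fin.le_def]
      have := r.isLt
      simp only [ht₀]
      omega
    have hlast : (1 : ℝ) - ∑ r ∈ Finset.univ.filter (· ≤ t₀), p (f r) = 0 := by
      rw [hfil]
      have hsum : ∑ r : Fin m, p (f r) = ∑ j, p j :=
        Fintype.sum_bijective f hbij _ _ (fun r => rfl)
      rw [hsum, hp1, sub_self]
    have hden : (∏ t : Fin m, ((1 : ℝ) - ∑ r ∈ Finset.univ.filter (· ≤ t), p (f r))) = 0 :=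
      Finset.prod_eq_zero (Finset.mem_univ t₀) hlast
    unfold gTerm
    rw [hden, div_zero]
  have h2 : Etot p 1 (Finset.univ : Finset (Fin m))
      = (∑ s ∈ Finset.range m, GS p 1 Finset.univ s) + GS p 1 Finset.univ m := by
    unfold Etot
    rw [hcard, Finset.sum_range_succ]
  have hL : ieL p (Finset.univ : Finset (Fin m))
      = ∑ A ∈ Finset.univ.powerset.filter (fun A : Finset (Fin m) => A.Nonempty),
        (-1 : ℝ) ^ (A.card + 1) * (∑ i ∈ A, p i)⁻¹ := rfl
  rw [← hL, ← h1, h2, hGm, add_zero]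
  rfl

/-- For a probability vector p, the inclusion–exclusion expression
Σᵢ 1/pᵢ − Σ_{i<j} 1/(pᵢ+pⱼ) + ⋯ + (−1)^{m+1}/(p₁+⋯+pₘ) equals the nested-sum expression
1 + Σ_{i₁} p_{i₁}/p(i₁) + ⋯ + Σ_{i₁,…,i_{m−1} distinct} p_{i₁}⋯p_{i_{m−1}}/(p(i₁)⋯p(i₁,…,i_{m−1})). -/
theorem inclusion_exclusion_eq_nested_sum
    {m : ℕ} (p : Fin m → ℝ) (hp0 : ∀ i, 0 < p i) (hp1 : ∑ i, p i = 1) :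
    ∑ A ∈ Finset.univ.powerset.filter (fun A : Finset (Fin m) => A.Nonempty),
        (-1 : ℝ) ^ (A.card + 1) * (∑ i ∈ A, p i)⁻¹
      = ∑ s ∈ Finset.range m, nestedSum p s := by
  rw [Finset.sum_congr rfl (fun s _ => nestedSum_eq_GS p s)]
  exact inclusion_exclusion_eq_nested_sum' p hp0 hp1
end
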